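/- arXiv:1609.09843 — 10 statements merged into one kernel-verified Lean document; each statement's English description precedes it below -/
import Mathlib

section
/- Let P be an n×n positive semidefinite Hermitian matrix of rank k < n that is saturated, i.e., every k×k principal submatrix of P is positive definite. Let G be an n×n diagonal positive semidefinite matrix with rank G = m < n - k. Then rank(P + G) = k + m. -/
open Matrix
open scoped ComplexOrder

theorem rank_add_diagonal_of_saturated (n k m : ℕ)
    (P G : Matrix (Fin n) (Fin n) ℂ)
    (hP : P.PosSemidef) (hrankP : P.rank = k) (hkn : k < n)
    (hsat : ∀ s : Finset (Fin n), s.card = k →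
      (P.submatrix (fun x : s => (x : Fin n)) (fun x : s => (x : Fin n))).PosDef)
    (hGdiag : G.IsDiag) (hG : G.PosSemidef) (hrankG : G.rank = m) (hm : m < n - k) :
    (P + G).rank = k + m := by
  classical
  -- Core consequence of saturation: a kernel vector supported on a set of size `k` is zero.
  have hker_supp : ∀ (x : Fin n → ℂ), P *ᵥ x = 0 →
      ∀ s : Finset (Fin n), s.card = k → (∀ i, i ∉ s → x i = 0) → x = 0 := by
    intro x hx s hs hsupp
    have hQ := hsat s hs
    set y : {a // a ∈ s} → ℂ := fun i => x i with hy
    have hQy : (P.submatrix (fun a : s => (a : Fin n)) (fun a : s => (a : Fin n))) *ᵥ y = 0 := by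
      funext i
      have h1 : ∑ j : {a // a ∈ s}, P (i : Fin n) (j : Fin n) * x (j : Fin n)
          = ∑ j ∈ s, P (i : Fin n) j * x j :=
        Finset.sum_coe_sort s (fun j => P (i : Fin n) j * x j)
      have h2 : ∑ j ∈ s, P (i : Fin n) j * x j = ∑ j : Fin n, P (i : Fin n) j * x j :=
        Finset.sum_subset (Finset.subset_univ s)
          (fun j _ hj => by rw [hsupp j hj, mul_zero])
      have h3 : ∑ j : Fin n, P (i : Fin n) j * x j = (P *ᵥ x) (i : Fin n) := rfl
      calc ((P.submatrix (fun a : s => (a : Fin n)) (fun a : s => (a : Fin n))) *ᵥ y) i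
          = ∑ j : {a // a ∈ s}, P (i : Fin n) (j : Fin n) * x (j : Fin n) := by
            simp [Matrix.mulVec, dotProduct, hy]
        _ = 0 := by rw [h1, h2, h3, hx]; rfl
    have hy0 : y = 0 := by
      by_contra hne
      have := hQ.dotProduct_mulVec_pos hne
      rw [hQy, dotProduct_zero] at this
      exact lt_irrefl _ this
    funext i
    by_cases hi : i ∈ s
    · exact congrFun hy0 ⟨i, hi⟩
    · exact hsupp i hi
  set Kp := LinearMap.ker P.mulVecLin with hKp
  set Kg := LinearMap.ker G.mulVecLin with hKg
  -- rank-nullity for P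
  have eP : P.rank + Module.finrank ℂ Kp = n := by
    have := LinearMap.finrank_range_add_finrank_ker P.mulVecLin
    simpa [Matrix.rank, Module.finrank_fin_fun] using this
  have hfinKp : Module.finrank ℂ Kp = n - k := by omega
  -- the support of G
  set S : Finset (Fin n) := Finset.univ.filter (fun i => G i i ≠ 0) with hS
  have hGd : Matrix.diagonal G.diag = G := hGdiag.diagonal_diag
  have hcardS : S.card = m := by
    rw [← hrankG, ← hGd, Matrix.rank_diagonal]
    rw [Fintype.card_subtype]
    congr 1
  -- membership in Kg
  have hmemKg : ∀ x : Fin n → ℂ, x ∈ Kg ↔ ∀ i ∈ S, x i = 0 := by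
    intro x
    rw [hKg, LinearMap.mem_ker, Matrix.mulVecLin_apply]
    constructor
    · intro h i hiS
      have hGi : G i i ≠ 0 := by simpa [hS] using hiS
      have := congrFun h i
      rw [← hGd, Matrix.mulVec_diagonal] at this
      rcases mul_eq_zero.mp this with h' | h'
      · exact absurd h' hGi
      · exact h'
    · intro h
      funext i
      rw [← hGd, Matrix.mulVec_diagonal]
      by_cases hGi : G i i = 0
      · rw [Matrix.diag_apply, hGi, zero_mul]; rfl
      · rw [h i (by simp [hS, hGi]), mul_zero]; rfl
  -- choose a superset T of S of size n - k
  obtain ⟨T, hST, hTcard⟩ := Finset.exists_superset_card_eq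
    (s := S) (n := n - k) (by omega) (by simp)
  -- restriction maps
  set πT : (Fin n → ℂ) →ₗ[ℂ] ({a // a ∈ T} → ℂ) :=
    LinearMap.funLeft ℂ ℂ (fun i : T => (i : Fin n)) with hπT
  set πS : (Fin n → ℂ) →ₗ[ℂ] ({a // a ∈ S} → ℂ) :=
    LinearMap.funLeft ℂ ℂ (fun i : S => (i : Fin n)) with hπS
  set f : Kp →ₗ[ℂ] ({a // a ∈ T} → ℂ) := πT.comp Kp.subtype with hf
  have hTc : Tᶜ.card = k := by
    rw [Finset.card_compl, hTcard, Fintype.card_fin]; omega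
  have hfinj : Function.Injective f := by
    rw [← LinearMap.ker_eq_bot, LinearMap.ker_eq_bot']
    rintro ⟨x, hx⟩ hfx
    have hx' : P *ᵥ x = 0 := hx
    have hxT : ∀ i ∈ T, x i = 0 := by
      intro i hi
      exact congrFun hfx ⟨i, hi⟩
    have : x = 0 := hker_supp x hx' Tᶜ hTc (fun i hi => hxT i (by simpa using hi))
    exact Subtype.ext this
  have hfinT : Module.finrank ℂ ({a // a ∈ T} → ℂ) = n - k := by
    rw [Module.finrank_pi, Fintype.card_coe, hTcard]
  have hfsurj : Function.Surjective f :=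
    (LinearMap.injective_iff_surjective_of_finrank_eq_finrank
      (by rw [hfinKp, hfinT])).mp hfinj
  -- factor πS through πT
  set h : {a // a ∈ S} → {a // a ∈ T} := fun i => ⟨(i : Fin n), hST i.2⟩ with hh
  have hπcomp : πS = (LinearMap.funLeft ℂ ℂ h).comp πT := by
    rw [hπS, hπT, ← LinearMap.funLeft_comp]
    rfl
  set g : Kp →ₗ[ℂ] ({a // a ∈ S} → ℂ) := πS.comp Kp.subtype with hg
  have hgsurj : Function.Surjective g := by
    have hhinj : Function.Injective h := by
      intro a b hab
      have : ((h a : {a // a ∈ T}) : Fin n) = ((h b : {a // a ∈ T}) : Fin n) := by rw [hab]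
      exact Subtype.ext this
    have : g = (LinearMap.funLeft ℂ ℂ h).comp f := by
      rw [hg, hπcomp, hf, LinearMap.comp_assoc]
    rw [this]
    exact (LinearMap.funLeft_surjective_of_injective ℂ ℂ h hhinj).comp hfsurj
  -- rank-nullity for g
  have eg := LinearMap.finrank_range_add_finrank_ker g
  have hrangeg : Module.finrank ℂ (LinearMap.range g) = m := by
    rw [LinearMap.range_eq_top.mpr hgsurj, finrank_top, Module.finrank_pi,
      Fintype.card_coe, hcardS]
  -- identify ker g with Kp ⊓ Kg
  have hkerπS : LinearMap.ker πS = Kg := by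
    ext x
    rw [LinearMap.mem_ker, hmemKg]
    constructor
    · intro hx i hi
      exact congrFun hx ⟨i, hi⟩
    · intro hx
      funext i
      exact hx i i.2
  have hkerg : LinearMap.ker g = Submodule.comap Kp.subtype (Kp ⊓ Kg) := by
    rw [hg, LinearMap.ker_comp, hkerπS, Submodule.comap_inf,
      Submodule.comap_subtype_self, top_inf_eq]
  have hfinkerg : Module.finrank ℂ (LinearMap.ker g) = Module.finrank ℂ (Kp ⊓ Kg : Submodule ℂ (Fin n → ℂ)) := by
    rw [hkerg]
    exact (Submodule.comapSubtypeEquivOfLe inf_le_left).finrank_eq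
  -- kernel of P + G
  have hkersum : LinearMap.ker (P + G).mulVecLin = Kp ⊓ Kg := by
    ext x
    simp only [LinearMap.mem_ker, Submodule.mem_inf, Matrix.mulVecLin_apply, hKp, hKg]
    constructor
    · intro hx
      have h1 : 0 ≤ star x ⬝ᵥ P *ᵥ x := hP.dotProduct_mulVec_nonneg x
      have h2 : 0 ≤ star x ⬝ᵥ G *ᵥ x := hG.dotProduct_mulVec_nonneg x
      have hsum : star x ⬝ᵥ P *ᵥ x + star x ⬝ᵥ G *ᵥ x = 0 := by
        rw [← dotProduct_add, ← Matrix.add_mulVec, hx, dotProduct_zero]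
      obtain ⟨hp0, hg0⟩ := (add_eq_zero_iff_of_nonneg h1 h2).mp hsum
      exact ⟨(hP.dotProduct_mulVec_zero_iff x).mp hp0,
        (hG.dotProduct_mulVec_zero_iff x).mp hg0⟩
    · rintro ⟨h1, h2⟩
      rw [Matrix.add_mulVec, h1, h2, add_zero]
  -- rank-nullity for P + G
  have ePG : (P + G).rank + Module.finrank ℂ (LinearMap.ker (P + G).mulVecLin) = n := by
    have := LinearMap.finrank_range_add_finrank_ker (P + G).mulVecLin
    simpa [Matrix.rank, Module.finrank_fin_fun] using this
  rw [hkersum] at ePG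
  rw [hfinKp, hrangeg, hfinkerg] at eg
  omega
end

section
/- Let T = diag(t₁,…,t_{n-1}) with distinct unimodular t_i, let E, M be the column vectors with entries 1 and w_i (|w_i|=1) respectively, let P be an invertible Hermitian matrix satisfying P - T·P·T* = E·E* - M·M*, let t_n be a unimodular point distinct from all t_i, and define X = (I - t_n·T*)·P⁻¹·(t_n·I - T)⁻¹·E and Y = (I - t_n·T*)·P⁻¹·(t_n·I - T)⁻¹·M. Then P⁻¹ - T*·P⁻¹·T = X·X* - Y·Y*. -/
open Matrix Complex ComplexConjugate

theorem inverse_stein_identity (m : ℕ) (t : Fin m → ℂ) (w : Fin m → ℂ) (tN : ℂ)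
    (ht : ∀ i, ‖t i‖ = 1) (hw : ∀ i, ‖w i‖ = 1)
    (htinj : Function.Injective t)
    (htN : ‖tN‖ = 1) (htNt : ∀ i, tN ≠ t i)
    (T : Matrix (Fin m) (Fin m) ℂ) (hT : T = Matrix.diagonal t)
    (E M : Matrix (Fin m) (Fin 1) ℂ)
    (hE : E = Matrix.of fun _ _ => (1 : ℂ))
    (hM : M = Matrix.of fun i _ => w i)
    (P : Matrix (Fin m) (Fin m) ℂ) (hPH : P.IsHermitian) (hPinv : IsUnit P.det)
    (hStein : P - T * P * Tᴴ = E * Eᴴ - M * Mᴴ)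
    (X Y : Matrix (Fin m) (Fin 1) ℂ)
    (hX : X = (1 - tN • Tᴴ) * P⁻¹ * (tN • (1 : Matrix (Fin m) (Fin m) ℂ) - T)⁻¹ * E)
    (hY : Y = (1 - tN • Tᴴ) * P⁻¹ * (tN • (1 : Matrix (Fin m) (Fin m) ℂ) - T)⁻¹ * M) :
    P⁻¹ - Tᴴ * P⁻¹ * T = X * Xᴴ - Y * Yᴴ := by
  have htN0 : tN ≠ 0 := by
    intro h
    rw [h] at htN
    simp at htN
  have hstar : (starRingEnd ℂ) tN = tN⁻¹ := by
    apply eq_inv_of_mul_eq_one_left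
    rw [mul_comm, Complex.mul_conj, Complex.normSq_eq_norm_sq, htN]
    norm_num
  -- unitarity of T
  have h1 : Tᴴ * T = 1 := by
    subst hT
    rw [Matrix.diagonal_conjTranspose, Matrix.diagonal_mul_diagonal]
    have : (fun i => star t i * t i) = fun _ => (1:ℂ) := by
      funext i
      simp only [Pi.star_apply, RCLike.star_def, mul_comm, Complex.mul_conj,
        Complex.normSq_eq_norm_sq, ht i]
      norm_num
    rw [this, Matrix.diagonal_one]
  have h2 : T * Tᴴ = 1 := by
    subst hT
    rw [Matrix.diagonal_conjTranspose, Matrix.diagonal_mul_diagonal]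
    have : (fun i => t i * star t i) = fun _ => (1:ℂ) := by
      funext i
      simp only [Pi.star_apply, RCLike.star_def, Complex.mul_conj,
        Complex.normSq_eq_norm_sq, ht i]
      norm_num
    rw [this, Matrix.diagonal_one]
  -- A and its inverse
  set A := tN • (1 : Matrix (Fin m) (Fin m) ℂ) - T with hA
  set K := A⁻¹ with hKdef
  have hAdet : IsUnit A.det := by
    rw [hA]
    subst hT
    have hd : tN • (1 : Matrix (Fin m) (Fin m) ℂ) - Matrix.diagonal t
        = Matrix.diagonal (fun i => tN - t i) := by
      ext i j
      by_cases h : i = j <;> simp [Matrix.diagonal_apply, Matrix.one_apply, h]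
    rw [hd]
    apply Matrix.isUnit_det_of_right_inverse (B := Matrix.diagonal (fun i => (tN - t i)⁻¹))
    rw [Matrix.diagonal_mul_diagonal]
    have : (fun i => (tN - t i) * (tN - t i)⁻¹) = fun _ => (1:ℂ) := by
      funext i
      exact mul_inv_cancel₀ (sub_ne_zero.mpr (htNt i))
    rw [this, Matrix.diagonal_one]
  have hAK : A * K = 1 := Matrix.mul_nonsing_inv _ hAdet
  have hKA : K * A = 1 := Matrix.nonsing_inv_mul _ hAdet
  -- K*T and T*K
  have hKT : K * T = tN • K - 1 := by
    have h : K * A = tN • K - K * T := by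
      rw [hA, Matrix.mul_sub, Matrix.mul_smul, Matrix.mul_one]
    rw [h] at hKA
    linear_combination (norm := abel) -hKA
  have hTK : T * K = tN • K - 1 := by
    have h : A * K = tN • K - T * K := by
      rw [hA, Matrix.sub_mul, Matrix.smul_mul, Matrix.one_mul]
    rw [h] at hAK
    linear_combination (norm := abel) -hAK
  have hAK' : A * K = 1 := Matrix.mul_nonsing_inv _ hAdet
  have hKA' : K * A = 1 := Matrix.nonsing_inv_mul _ hAdet
  -- commutation of Tᴴ with K
  have hTHA : Tᴴ * A = A * Tᴴ := by
    rw [hA, Matrix.mul_sub, Matrix.sub_mul, Matrix.mul_smul, Matrix.smul_mul,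
      Matrix.mul_one, Matrix.one_mul, h1, h2]
  have hTHK : Tᴴ * K = K * Tᴴ := by
    calc Tᴴ * K = (K * A) * Tᴴ * K := by rw [hKA', Matrix.one_mul]
    _ = K * (A * Tᴴ) * K := by simp only [Matrix.mul_assoc]
    _ = K * (Tᴴ * A) * K := by rw [hTHA]
    _ = K * Tᴴ * (A * K) := by simp only [Matrix.mul_assoc]
    _ = K * Tᴴ := by rw [hAK', Matrix.mul_one]
  -- conj transpose facts
  have hAH : Aᴴ = tN⁻¹ • (1 : Matrix (Fin m) (Fin m) ℂ) - Tᴴ := by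
    rw [hA, Matrix.conjTranspose_sub, Matrix.conjTranspose_smul, Matrix.conjTranspose_one,
      Complex.star_def, hstar]
  have hKH : Kᴴ = -(tN • (K * T)) := by
    rw [hKdef, Matrix.conjTranspose_nonsing_inv]
    refine Matrix.inv_eq_right_inv ?_
    rw [hAH]
    have e1 : Tᴴ * (K * T) = K := by
      rw [← Matrix.mul_assoc, hTHK, Matrix.mul_assoc, h1, Matrix.mul_one]
    rw [Matrix.mul_neg, Matrix.mul_smul, Matrix.sub_mul, Matrix.smul_mul, Matrix.one_mul, e1,
      hKT]
    match_scalars <;> field_simp <;> ring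
  have hKH' : Kᴴ = tN • (1 : Matrix (Fin m) (Fin m) ℂ) - (tN * tN) • K := by
    rw [hKH, hKT]
    match_scalars <;> ring
  -- tail-form rewriting lemmas
  have f1 : ∀ W : Matrix (Fin m) (Fin m) ℂ, K * (T * W) = tN • (K * W) - W := by
    intro W
    rw [← Matrix.mul_assoc, hKT, Matrix.sub_mul, Matrix.smul_mul, Matrix.one_mul]
  have f6 : ∀ W : Matrix (Fin m) (Fin m) ℂ, P * (P⁻¹ * W) = W := by
    intro W
    rw [← Matrix.mul_assoc, Matrix.mul_nonsing_inv _ hPinv, Matrix.one_mul]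
  have f7 : ∀ W : Matrix (Fin m) (Fin m) ℂ, P⁻¹ * (P * W) = W := by
    intro W
    rw [← Matrix.mul_assoc, Matrix.nonsing_inv_mul _ hPinv, Matrix.one_mul]
  have f9 : ∀ W : Matrix (Fin m) (Fin m) ℂ,
      Kᴴ * W = tN • W - (tN * tN) • (K * W) := by
    intro W
    rw [hKH', Matrix.sub_mul, Matrix.smul_mul, Matrix.smul_mul, Matrix.one_mul]
  have f10 : ∀ W : Matrix (Fin m) (Fin m) ℂ, Tᴴ * (Kᴴ * W) = -(tN • (K * W)) := by
    intro W
    have e1 : Tᴴ * Kᴴ = tN⁻¹ • Kᴴ - 1 := by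
      have h := congrArg Matrix.conjTranspose hKT
      simp only [Matrix.conjTranspose_mul, Matrix.conjTranspose_smul, Matrix.conjTranspose_sub,
        Matrix.conjTranspose_one, Complex.star_def, hstar] at h
      exact h
    rw [← Matrix.mul_assoc, e1, Matrix.sub_mul, Matrix.smul_mul, Matrix.one_mul, f9 W]
    match_scalars <;> field_simp <;> ring
  -- B facts
  set B := (1 : Matrix (Fin m) (Fin m) ℂ) - tN • Tᴴ with hB
  have hBH : Bᴴ = 1 - tN⁻¹ • T := by
    rw [hB, Matrix.conjTranspose_sub, Matrix.conjTranspose_smul, Matrix.conjTranspose_one,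
      Matrix.conjTranspose_conjTranspose, Complex.star_def, hstar]
  have gB2 : ∀ W : Matrix (Fin m) (Fin m) ℂ, B * (K * W) = -(Tᴴ * W) := by
    intro W
    have hBK : B * K = -Tᴴ := by
      have hB2 : B = -(Tᴴ * A) := by
        rw [hA, Matrix.mul_sub, Matrix.mul_smul, Matrix.mul_one, h1, hB]
        abel
      rw [hB2, Matrix.neg_mul, Matrix.mul_assoc, hAK', Matrix.mul_one]
    rw [← Matrix.mul_assoc, hBK, Matrix.neg_mul]
  -- the key middle identity
  have key1 : ∀ W : Matrix (Fin m) (Fin m) ℂ,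
      K * ((P - T * P * Tᴴ) * (Kᴴ * W)) =
        tN • (K * (P * W)) - tN • (P * (K * W)) := by
    intro W
    have expand : (P - T * P * Tᴴ) * (Kᴴ * W)
        = P * (Kᴴ * W) - T * (P * (Tᴴ * (Kᴴ * W))) := by
      rw [Matrix.sub_mul]
      simp only [Matrix.mul_assoc]
    rw [expand, Matrix.mul_sub, f10 W, f9 W]
    simp only [Matrix.mul_neg, Matrix.mul_smul, Matrix.mul_sub, smul_sub, smul_smul,
      smul_neg, neg_sub]
    rw [f1 (P * (K * W))]
    match_scalars <;> ring
  -- assemble X Xᴴ - Y Yᴴ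
  have hRH : (P⁻¹)ᴴ = P⁻¹ := hPH.inv
  have hZ : ∀ N : Matrix (Fin m) (Fin 1) ℂ,
      (B * P⁻¹ * K * N) * (B * P⁻¹ * K * N)ᴴ
        = B * (P⁻¹ * (K * ((N * Nᴴ) * (Kᴴ * (P⁻¹ * Bᴴ))))) := by
    intro N
    simp only [Matrix.conjTranspose_mul, hRH, Matrix.mul_assoc]
  rw [hX, hY, hZ E, hZ M]
  have hcomb : B * (P⁻¹ * (K * ((E * Eᴴ) * (Kᴴ * (P⁻¹ * Bᴴ)))))
      - B * (P⁻¹ * (K * ((M * Mᴴ) * (Kᴴ * (P⁻¹ * Bᴴ)))))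
      = B * (P⁻¹ * (K * ((P - T * P * Tᴴ) * (Kᴴ * (P⁻¹ * Bᴴ))))) := by
    rw [hStein]
    simp only [Matrix.sub_mul, Matrix.mul_sub]
  rw [hcomb, key1 (P⁻¹ * Bᴴ)]
  -- final assembly
  have e3 : K * Bᴴ = tN⁻¹ • (1 : Matrix (Fin m) (Fin m) ℂ) := by
    rw [hBH, Matrix.mul_sub, Matrix.mul_smul, Matrix.mul_one, hKT]
    match_scalars <;> field_simp <;> ring
  rw [Matrix.mul_sub, Matrix.mul_sub]
  simp only [Matrix.mul_smul, smul_sub]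
  rw [f6 Bᴴ, f7 (K * (P⁻¹ * Bᴴ)), gB2 (P⁻¹ * Bᴴ), e3]
  rw [hBH, hB]
  simp only [Matrix.mul_smul, Matrix.smul_mul, Matrix.mul_sub, Matrix.sub_mul,
    Matrix.mul_one, Matrix.one_mul, Matrix.mul_neg, Matrix.neg_mul, Matrix.mul_assoc]
  match_scalars <;> field_simp <;> ring
end

section
/- With notation as in the inverse Stein identity (T = diag(t₁,…,t_{n-1}) with distinct unimodular t_i, P invertible Hermitian satisfying P - T·P·T* = E·E* - M·M* with E the all-ones vector and M the vector of unimodular w_i, t_n unimodular distinct from all t_i, X and Y the columns with entries x_i = (1 - t_n·conj(t_i))·e_i*·P⁻¹·(t_n·I - T)⁻¹·E and y_i = (1 - t_n·conj(t_i))·e_i*·P⁻¹·(t_n·I - T)⁻¹·M), for each i one has |x_i| = |y_i| and x_i ≠ 0. -/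
open Matrix Complex ComplexConjugate

theorem entries_abs_eq_and_nonzero (m : ℕ) (t : Fin m → ℂ) (w : Fin m → ℂ) (tN : ℂ)
    (ht : ∀ i, ‖t i‖ = 1) (hw : ∀ i, ‖w i‖ = 1)
    (htinj : Function.Injective t)
    (htN : ‖tN‖ = 1) (htNt : ∀ i, tN ≠ t i)
    (T : Matrix (Fin m) (Fin m) ℂ) (hT : T = Matrix.diagonal t)
    (E M : Matrix (Fin m) (Fin 1) ℂ)
    (hE : E = Matrix.of fun _ _ => (1 : ℂ))
    (hM : M = Matrix.of fun i _ => w i)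
    (P : Matrix (Fin m) (Fin m) ℂ) (hPH : P.IsHermitian) (hPinv : IsUnit P.det)
    (hStein : P - T * P * Tᴴ = E * Eᴴ - M * Mᴴ)
    (x y : Fin m → ℂ)
    (hx : ∀ i, x i = (1 - tN * conj (t i)) *
      ((P⁻¹ * (tN • (1 : Matrix (Fin m) (Fin m) ℂ) - T)⁻¹ * E) i 0))
    (hy : ∀ i, y i = (1 - tN * conj (t i)) *
      ((P⁻¹ * (tN • (1 : Matrix (Fin m) (Fin m) ℂ) - T)⁻¹ * M) i 0)) :
    ∀ i, ‖x i‖ = ‖y i‖ ∧ x i ≠ 0 := by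
  subst hT
  -- scalar facts
  have hcN : tN * conj tN = 1 := by
    rw [Complex.mul_conj]; norm_cast; rw [Complex.normSq_eq_norm_sq, htN]; norm_num
  have hct : ∀ i, t i * conj (t i) = 1 := fun i => by
    rw [Complex.mul_conj]; norm_cast; rw [Complex.normSq_eq_norm_sq, ht i]; norm_num
  have hdne : ∀ j, tN - t j ≠ 0 := fun j => sub_ne_zero.mpr (htNt j)
  have hdcne : ∀ j, conj tN - conj (t j) ≠ 0 := fun j h => hdne j (by
    have h2 := congrArg conj h
    simpa [map_sub] using h2)
  set Q : Matrix (Fin m) (Fin m) ℂ := P⁻¹ with hQdef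
  have hQP : Q * P = 1 := Matrix.nonsing_inv_mul P hPinv
  have hPQ : P * Q = 1 := Matrix.mul_nonsing_inv P hPinv
  have hQH : Qᴴ = Q := hPH.inv
  set Di : Matrix (Fin m) (Fin m) ℂ := Matrix.diagonal (fun j => (tN - t j)⁻¹) with hDidef
  set DiH : Matrix (Fin m) (Fin m) ℂ :=
    Matrix.diagonal (fun j => (conj tN - conj (t j))⁻¹) with hDiHdef
  set Dm : Matrix (Fin m) (Fin m) ℂ := Matrix.diagonal (fun j => tN - t j) with hDmdef
  have hDm : tN • (1 : Matrix (Fin m) (Fin m) ℂ) - Matrix.diagonal t = Dm := by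
    rw [hDmdef, Matrix.smul_one_eq_diagonal, Matrix.diagonal_sub]
  have hDmDi : Dm * Di = 1 := by
    rw [hDmdef, hDidef, Matrix.diagonal_mul_diagonal,
      show (fun j => (tN - t j) * (tN - t j)⁻¹) = fun _ => (1:ℂ) from
        funext fun j => mul_inv_cancel₀ (hdne j), Matrix.diagonal_one]
  have hDiDm : Di * Dm = 1 := by
    rw [hDidef, hDmdef, Matrix.diagonal_mul_diagonal,
      show (fun j => (tN - t j)⁻¹ * (tN - t j)) = fun _ => (1:ℂ) from
        funext fun j => inv_mul_cancel₀ (hdne j), Matrix.diagonal_one]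
  have hDinv : (tN • (1 : Matrix (Fin m) (Fin m) ℂ) - Matrix.diagonal t)⁻¹ = Di := by
    rw [hDm]; exact Matrix.inv_eq_right_inv hDmDi
  have hTH : (Matrix.diagonal t)ᴴ = Matrix.diagonal (fun j => conj (t j)) := by
    rw [Matrix.diagonal_conjTranspose]; rfl
  have hTHT : (Matrix.diagonal t)ᴴ * Matrix.diagonal t = 1 := by
    rw [hTH, Matrix.diagonal_mul_diagonal,
      show (fun j => conj (t j) * t j) = fun _ => (1:ℂ) from
        funext fun j => by rw [mul_comm]; exact hct j, Matrix.diagonal_one]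
  have hDiConj : Diᴴ = DiH := by
    rw [hDidef, hDiHdef]
    have h : (star fun j => (tN - t j)⁻¹) = fun j => (conj tN - conj (t j))⁻¹ := by
      funext j
      simp only [Pi.star_apply, star_inv₀, star_sub, Complex.star_def]
    rw [Matrix.diagonal_conjTranspose, h]
  have hBH : (Q * Di)ᴴ = DiH * Q := by
    rw [Matrix.conjTranspose_mul, hDiConj, hQH]
  rw [hDinv] at hx hy
  -- the middle identity (entrywise)
  have hmid : Di * (P - Matrix.diagonal t * P * (Matrix.diagonal t)ᴴ) * DiH
      = tN • (Di * P) + conj tN • (P * DiH) - P := by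
    rw [hTH, hDidef, hDiHdef]
    ext i j
    simp only [Matrix.diagonal_mul, Matrix.mul_diagonal, Matrix.sub_apply, Matrix.add_apply,
      Matrix.smul_apply, smul_eq_mul]
    have h1 := hdne i
    have h2 := hdcne j
    field_simp
    linear_combination (-(P i j)) * hcN
  -- cancellation helpers
  have hcan1 : ∀ X : Matrix (Fin m) (Fin m) ℂ, Q * (P * X) = X := fun X => by
    rw [← Matrix.mul_assoc, hQP, Matrix.one_mul]
  have hcan2 : ∀ X : Matrix (Fin m) (Fin m) ℂ, P * (Q * X) = X := fun X => by
    rw [← Matrix.mul_assoc, hPQ, Matrix.one_mul]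
  -- the full sandwich identity
  have hfull : (Q * Di) * (P - Matrix.diagonal t * P * (Matrix.diagonal t)ᴴ) * (DiH * Q)
      = tN • (Q * Di) + conj tN • (DiH * Q) - Q := by
    calc (Q * Di) * (P - Matrix.diagonal t * P * (Matrix.diagonal t)ᴴ) * (DiH * Q)
        = Q * (Di * (P - Matrix.diagonal t * P * (Matrix.diagonal t)ᴴ) * DiH * Q) := by
          simp only [Matrix.mul_assoc]
      _ = Q * ((tN • (Di * P) + conj tN • (P * DiH) - P) * Q) := by rw [hmid]
      _ = tN • (Q * Di) + conj tN • (DiH * Q) - Q := by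
          simp only [Matrix.mul_add, Matrix.add_mul, Matrix.mul_sub, Matrix.sub_mul,
            smul_mul_assoc, mul_smul_comm, Matrix.mul_assoc, hPQ, hQP, hcan1, hcan2,
            Matrix.mul_one, Matrix.one_mul]
  -- rewrite via Stein equation and split
  have hrank : (Q * Di) * (E * Eᴴ) * (DiH * Q) - (Q * Di) * (M * Mᴴ) * (DiH * Q)
      = tN • (Q * Di) + conj tN • (DiH * Q) - Q := by
    rw [← Matrix.sub_mul, ← Matrix.mul_sub, ← hStein]
    exact hfull
  -- column products
  have hZ : ∀ N : Matrix (Fin m) (Fin 1) ℂ,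
      (Q * Di) * (N * Nᴴ) * (DiH * Q) = (Q * Di * N) * (Q * Di * N)ᴴ := by
    intro N
    rw [Matrix.conjTranspose_mul, hBH]
    simp only [Matrix.mul_assoc]
  have hentry : ∀ (Z : Matrix (Fin m) (Fin 1) ℂ) (i : Fin m),
      (Z * Zᴴ) i i = Z i 0 * conj (Z i 0) := by
    intro Z i
    simp [Matrix.mul_apply, Fin.sum_univ_one]
  -- RHS diagonal entries vanish
  have hRHS0 : ∀ i, (tN • (Q * Di) + conj tN • (DiH * Q) - Q) i i = 0 := by
    intro i
    rw [hDidef, hDiHdef]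
    simp only [Matrix.add_apply, Matrix.sub_apply, Matrix.smul_apply, smul_eq_mul,
      Matrix.mul_diagonal, Matrix.diagonal_mul]
    have h1 := hdne i
    have h2 := hdcne i
    field_simp
    linear_combination (Q i i) * hcN - (Q i i) * hct i
  -- equality of squared moduli pieces
  have hsq : ∀ i, (Q * Di * E) i 0 * conj ((Q * Di * E) i 0)
      = (Q * Di * M) i 0 * conj ((Q * Di * M) i 0) := by
    intro i
    have h0 : ((Q * Di) * (E * Eᴴ) * (DiH * Q) - (Q * Di) * (M * Mᴴ) * (DiH * Q)) i i
        = 0 := by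
      rw [hrank]; exact hRHS0 i
    rw [Matrix.sub_apply, hZ, hZ, hentry, hentry] at h0
    exact sub_eq_zero.mp h0
  -- |x i| = |y i|
  have hxy : ∀ i, x i * conj (x i) = y i * conj (y i) := by
    intro i
    rw [hx i, hy i, _root_.map_mul, _root_.map_mul]
    linear_combination ((1 - tN * conj (t i)) * conj (1 - tN * conj (t i))) * hsq i
  have habs : ∀ i, ‖x i‖ = ‖y i‖ := by
    intro i
    have h1 : (Complex.normSq (x i) : ℂ) = (Complex.normSq (y i) : ℂ) := by
      rw [← Complex.mul_conj, ← Complex.mul_conj]; exact hxy i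
    have h2 : Complex.normSq (x i) = Complex.normSq (y i) := by exact_mod_cast h1
    rw [Complex.norm_def, Complex.norm_def, h2]
  -- now the nonvanishing
  intro i
  refine ⟨habs i, ?_⟩
  intro hx0
  have hcti := hct i
  have hctne : conj (t i) ≠ 0 := by
    intro h0
    rw [h0, mul_zero] at hcti
    exact zero_ne_one hcti
  have hai : (1 : ℂ) - tN * conj (t i) ≠ 0 := by
    intro h
    apply htNt i
    have h1 : tN * conj (t i) = t i * conj (t i) := by
      rw [hcti]; linear_combination -h
    exact mul_right_cancel₀ hctne h1
  have hu0 : (Q * Di * E) i 0 = 0 := by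
    have h0 : (1 - tN * conj (t i)) * ((Q * Di * E) i 0) = 0 := by
      rw [← hx i]; exact hx0
    exact (mul_eq_zero.mp h0).resolve_left hai
  have hy0 : y i = 0 := by
    have h0 : ‖y i‖ = 0 := by rw [← habs i, hx0, norm_zero]
    exact norm_eq_zero.mp h0
  have hv0 : (Q * Di * M) i 0 = 0 := by
    have h0 : (1 - tN * conj (t i)) * ((Q * Di * M) i 0) = 0 := by
      rw [← hy i]; exact hy0
    exact (mul_eq_zero.mp h0).resolve_left hai
  -- row-vector machinery
  set ei : Matrix (Fin 1) (Fin m) ℂ := Matrix.of (fun _ k => if k = i then 1 else 0)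
    with heidef
  have heimulm : ∀ (B : Matrix (Fin m) (Fin m) ℂ) (j : Fin m), (ei * B) 0 j = B i j := by
    intro B j; rw [heidef]; simp [Matrix.mul_apply, ite_mul]
  have heimul1 : ∀ (B : Matrix (Fin m) (Fin 1) ℂ), (ei * B) 0 0 = B i 0 := by
    intro B; rw [heidef]; simp [Matrix.mul_apply, ite_mul]
  have hone : ∀ (A : Matrix (Fin 1) (Fin 1) ℂ), A 0 0 = 0 → A = 0 := by
    intro A h
    ext a b
    have ha : a = 0 := Subsingleton.elim a 0
    have hb : b = 0 := Subsingleton.elim b 0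
    rw [ha, hb, h, Matrix.zero_apply]
  set V : Matrix (Fin 1) (Fin m) ℂ := ei * Q * Di with hVdef
  have hVE : V * E = 0 := by
    apply hone
    have e1 : V * E = ei * (Q * Di * E) := by rw [hVdef]; simp only [Matrix.mul_assoc]
    rw [e1, heimul1, hu0]
  have hVM : V * M = 0 := by
    apply hone
    have e1 : V * M = ei * (Q * Di * M) := by rw [hVdef]; simp only [Matrix.mul_assoc]
    rw [e1, heimul1, hv0]
  have hVSt : V * (P - Matrix.diagonal t * P * (Matrix.diagonal t)ᴴ) = 0 := by
    rw [hStein, Matrix.mul_sub, ← Matrix.mul_assoc, ← Matrix.mul_assoc, hVE, hVM,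
      Matrix.zero_mul, Matrix.zero_mul, sub_zero]
  have hVPeq : V * P = V * (Matrix.diagonal t * P * (Matrix.diagonal t)ᴴ) := by
    rw [Matrix.mul_sub] at hVSt
    exact sub_eq_zero.mp hVSt
  have hVPT : V * (P * Matrix.diagonal t) = V * (Matrix.diagonal t * P) := by
    calc V * (P * Matrix.diagonal t)
        = V * P * Matrix.diagonal t := (Matrix.mul_assoc V P (Matrix.diagonal t)).symm
      _ = V * (Matrix.diagonal t * P * (Matrix.diagonal t)ᴴ) * Matrix.diagonal t := by
          rw [hVPeq]
      _ = V * (Matrix.diagonal t * P) := by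
          simp only [Matrix.mul_assoc, hTHT, Matrix.mul_one]
  have hcomm : V * P * Dm = V * Dm * P := by
    rw [← hDm]
    simp only [Matrix.mul_sub, Matrix.sub_mul, mul_smul_comm, smul_mul_assoc,
      Matrix.mul_one, Matrix.one_mul, Matrix.mul_assoc]
    rw [hVPT]
  have hDiDmP : Di * (Dm * P) = P := by rw [← Matrix.mul_assoc, hDiDm, Matrix.one_mul]
  have h6 : V * Dm * P = ei := by
    rw [hVdef]
    simp only [Matrix.mul_assoc, hDiDmP, hQP, Matrix.mul_one]
  have hVP : V * P = ei * Di := by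
    have h7 : V * P * (Dm * Di) = ei * Di := by
      rw [← Matrix.mul_assoc, hcomm, h6]
    rw [hDmDi, Matrix.mul_one] at h7
    exact h7
  have hVQ : V = ei * Di * Q := by
    have h8 := congrArg (fun A => A * Q) hVP
    simpa only [Matrix.mul_assoc, hPQ, Matrix.mul_one] using h8
  have hQE0 : (Q * E) i 0 = 0 := by
    have h9 : (ei * (Di * (Q * E))) 0 0 = 0 := by
      rw [← Matrix.mul_assoc, ← Matrix.mul_assoc, ← hVQ, hVE, Matrix.zero_apply]
    rw [heimul1] at h9
    rw [hDidef] at h9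
    rw [Matrix.diagonal_mul] at h9
    exact (mul_eq_zero.mp h9).resolve_left (inv_ne_zero (hdne i))
  have hQM0 : (Q * M) i 0 = 0 := by
    have h9 : (ei * (Di * (Q * M))) 0 0 = 0 := by
      rw [← Matrix.mul_assoc, ← Matrix.mul_assoc, ← hVQ, hVM, Matrix.zero_apply]
    rw [heimul1] at h9
    rw [hDidef] at h9
    rw [Matrix.diagonal_mul] at h9
    exact (mul_eq_zero.mp h9).resolve_left (inv_ne_zero (hdne i))
  set U : Matrix (Fin 1) (Fin m) ℂ := ei * Q with hUdef
  have hUE : U * E = 0 := by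
    apply hone
    have e1 : U * E = ei * (Q * E) := by rw [hUdef, Matrix.mul_assoc]
    rw [e1, heimul1, hQE0]
  have hUM : U * M = 0 := by
    apply hone
    have e1 : U * M = ei * (Q * M) := by rw [hUdef, Matrix.mul_assoc]
    rw [e1, heimul1, hQM0]
  have hUSt : U * (P - Matrix.diagonal t * P * (Matrix.diagonal t)ᴴ) = 0 := by
    rw [hStein, Matrix.mul_sub, ← Matrix.mul_assoc, ← Matrix.mul_assoc, hUE, hUM,
      Matrix.zero_mul, Matrix.zero_mul, sub_zero]
  have hUPeq : U * P = U * (Matrix.diagonal t * P * (Matrix.diagonal t)ᴴ) := by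
    rw [Matrix.mul_sub] at hUSt
    exact sub_eq_zero.mp hUSt
  have hUPT : U * (P * Matrix.diagonal t) = U * (Matrix.diagonal t * P) := by
    calc U * (P * Matrix.diagonal t)
        = U * P * Matrix.diagonal t := (Matrix.mul_assoc U P (Matrix.diagonal t)).symm
      _ = U * (Matrix.diagonal t * P * (Matrix.diagonal t)ᴴ) * Matrix.diagonal t := by
          rw [hUPeq]
      _ = U * (Matrix.diagonal t * P) := by
          simp only [Matrix.mul_assoc, hTHT, Matrix.mul_one]
  have hUP : U * P = ei := by
    rw [hUdef, Matrix.mul_assoc, hQP, Matrix.mul_one]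
  have heiT : ei * Matrix.diagonal t = t i • ei := by
    rw [heidef]
    ext a k
    simp only [Matrix.mul_diagonal, Matrix.smul_apply, Matrix.of_apply, smul_eq_mul]
    by_cases hk : k = i
    · subst hk; simp
    · simp [hk]
  have hUT : U * Matrix.diagonal t = t i • U := by
    calc U * Matrix.diagonal t
        = U * Matrix.diagonal t * (P * Q) := by rw [hPQ, Matrix.mul_one]
      _ = U * (Matrix.diagonal t * P) * Q := by simp only [Matrix.mul_assoc]
      _ = U * (P * Matrix.diagonal t) * Q := by rw [← hUPT]
      _ = U * P * Matrix.diagonal t * Q := by simp only [Matrix.mul_assoc]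
      _ = ei * Matrix.diagonal t * Q := by rw [hUP]
      _ = (t i • ei) * Q := by rw [heiT]
      _ = t i • U := by rw [Matrix.smul_mul, hUdef]
  have hUk : ∀ k, k ≠ i → U 0 k = 0 := by
    intro k hk
    have h11 := congrArg (fun A => A 0 k) hUT
    simp only [Matrix.mul_diagonal, Matrix.smul_apply, smul_eq_mul] at h11
    have h12 : U 0 k * (t k - t i) = 0 := by linear_combination h11
    exact (mul_eq_zero.mp h12).resolve_right
      (sub_ne_zero.mpr fun h => hk (htinj h))
  have hUi : U 0 i = 0 := by
    have h13 := congrArg (fun A => A 0 0) hUE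
    simp only [Matrix.mul_apply, hE, Matrix.of_apply, mul_one, Matrix.zero_apply] at h13
    rwa [Finset.sum_eq_single i (fun k _ hk => hUk k hk)
      (fun h => absurd (Finset.mem_univ i) h)] at h13
  have hfinal := congrArg (fun A => A 0 i) hUP
  simp only [Matrix.mul_apply] at hfinal
  rw [Finset.sum_eq_zero (fun k _ => by
    rcases eq_or_ne k i with rfl | hk
    · rw [hUi, zero_mul]
    · rw [hUk k hk, zero_mul])] at hfinal
  rw [heidef] at hfinal
  simp at hfinal
end

section
/- Let T = diag(t₁,…,t_{n-1}) with distinct unimodular nonzero t_i, E and M column vectors with E the all-ones vector and M having unimodular entries, P an invertible Hermitian matrix satisfying P - T·P·T* = E·E* - M·M*, t_n a unimodular point distinct from all t_i, and define the 2×2 matrix function Θ(z) = I₂ + (z - t_n)·[E*; M*]·(I - z·T*)⁻¹·P⁻¹·(t_n·I - T)⁻¹·[E, -M]. Then for all z, ζ with z·conj(ζ) ≠ 1 and z, ζ avoiding the poles, (J - Θ(z)·J·Θ(ζ)*)/(1 - z·conj(ζ)) = [E*; M*]·(I - z·T*)⁻¹·P⁻¹·(I - conj(ζ)·T)⁻¹·[E,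 M], where J = diag(1, -1). -/
open Matrix Complex ComplexConjugate

theorem theta_J_identity (m : ℕ) (t : Fin m → ℂ) (w : Fin m → ℂ) (tN : ℂ)
    (ht : ∀ i, ‖t i‖ = 1) (hw : ∀ i, ‖w i‖ = 1)
    (htinj : Function.Injective t) (ht0 : ∀ i, t i ≠ 0)
    (htN : ‖tN‖ = 1) (htNt : ∀ i, tN ≠ t i)
    (T : Matrix (Fin m) (Fin m) ℂ) (hT : T = Matrix.diagonal t)
    (A : Matrix (Fin 2) (Fin m) ℂ)
    (hA : A = Matrix.of fun p j => if p = 0 then (1 : ℂ) else conj (w j))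
    (B C : Matrix (Fin m) (Fin 2) ℂ)
    (hB : B = Matrix.of fun j p => if p = 0 then (1 : ℂ) else -(w j))
    (hC : C = Matrix.of fun j p => if p = 0 then (1 : ℂ) else w j)
    (E M : Matrix (Fin m) (Fin 1) ℂ)
    (hE : E = Matrix.of fun _ _ => (1 : ℂ))
    (hM : M = Matrix.of fun i _ => w i)
    (P : Matrix (Fin m) (Fin m) ℂ) (hPH : P.IsHermitian) (hPinv : IsUnit P.det)
    (hStein : P - T * P * Tᴴ = E * Eᴴ - M * Mᴴ)
    (Θ : ℂ → Matrix (Fin 2) (Fin 2) ℂ)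
    (hΘ : ∀ z, Θ z = 1 + (z - tN) •
      (A * (1 - z • Tᴴ)⁻¹ * P⁻¹ * (tN • (1 : Matrix (Fin m) (Fin m) ℂ) - T)⁻¹ * B))
    (J : Matrix (Fin 2) (Fin 2) ℂ) (hJ : J = Matrix.diagonal ![1, -1])
    (z ζ : ℂ) (hzζ : z * conj ζ ≠ 1)
    (hz : IsUnit (1 - z • Tᴴ).det) (hζ : IsUnit (1 - ζ • Tᴴ).det)
    (hζ' : IsUnit (1 - conj ζ • T).det) :
    (1 - z * conj ζ)⁻¹ • (J - Θ z * J * (Θ ζ)ᴴ)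
      = A * (1 - z • Tᴴ)⁻¹ * P⁻¹ * (1 - conj ζ • T)⁻¹ * C := by
  -- scalar facts
  have hzζ1 : (1 : ℂ) - z * conj ζ ≠ 0 := sub_ne_zero_of_ne (Ne.symm hzζ)
  have htN0 : tN ≠ 0 := by
    intro h; rw [h] at htN; simp at htN
  have htNc : tN * conj tN = 1 := by
    rw [Complex.mul_conj]; norm_cast; rw [Complex.normSq_eq_norm_sq, htN]; norm_num
  have htc : ∀ i, conj (t i) * t i = 1 := by
    intro i
    rw [mul_comm, Complex.mul_conj]; norm_cast; rw [Complex.normSq_eq_norm_sq, ht]; norm_num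
  have hne : ∀ i, tN - t i ≠ 0 := fun i => sub_ne_zero_of_ne (htNt i)
  have htNci : conj tN = tN⁻¹ := (inv_eq_of_mul_eq_one_right htNc).symm
  have htci : ∀ i, conj (t i) = (t i)⁻¹ :=
    fun i => (inv_eq_of_mul_eq_one_left (htc i)).symm
  -- diagonal structure
  set G : Matrix (Fin m) (Fin m) ℂ := Matrix.diagonal (fun i => (tN - t i)⁻¹) with hGdef
  have hDdiag : tN • (1 : Matrix (Fin m) (Fin m) ℂ) - T
      = Matrix.diagonal (fun i => tN - t i) := by
    rw [hT]
    ext i j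
    by_cases hij : i = j <;>
      simp [Matrix.diagonal_apply, Matrix.one_apply, hij]
  have hDG : (tN • (1 : Matrix (Fin m) (Fin m) ℂ) - T) * G = 1 := by
    rw [hDdiag, hGdef, diagonal_mul_diagonal]
    ext i j
    by_cases hij : i = j <;>
      simp [Matrix.diagonal_apply, Matrix.one_apply, hij, mul_inv_cancel₀ (hne j)]
  have hGD : G * (tN • (1 : Matrix (Fin m) (Fin m) ℂ) - T) = 1 := by
    rw [hDdiag, hGdef, diagonal_mul_diagonal]
    ext i j
    by_cases hij : i = j <;>
      simp [Matrix.diagonal_apply, Matrix.one_apply, hij, inv_mul_cancel₀ (hne j)]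
  have hDinv : (tN • (1 : Matrix (Fin m) (Fin m) ℂ) - T)⁻¹ = G :=
    Matrix.inv_eq_right_inv hDG
  have hTT : Tᴴ * T = 1 := by
    rw [hT, diagonal_conjTranspose, diagonal_mul_diagonal]
    ext i j
    by_cases hij : i = j <;>
      simp [Matrix.diagonal_apply, Matrix.one_apply, hij, Complex.star_def, htc j]
  have hGH : Gᴴ = (-tN) • (T * G) := by
    rw [hGdef, hT, diagonal_conjTranspose, diagonal_mul_diagonal]
    ext i j
    by_cases hij : i = j
    · subst hij
      simp only [Matrix.diagonal_apply_eq, Matrix.smul_apply, Pi.star_apply, smul_eq_mul,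
        Complex.star_def, map_inv₀, map_sub, htNci, htci]
      refine inv_eq_of_mul_eq_one_right ?_
      have h3 : (tN⁻¹ - (t i)⁻¹) * (-tN * t i) = tN - t i := by
        field_simp [htN0, ht0 i]
        ring
      calc (tN⁻¹ - (t i)⁻¹) * (-tN * (t i * (tN - t i)⁻¹))
          = ((tN⁻¹ - (t i)⁻¹) * (-tN * t i)) * (tN - t i)⁻¹ := by ring
        _ = (tN - t i) * (tN - t i)⁻¹ := by rw [h3]
        _ = 1 := mul_inv_cancel₀ (hne i)
    · simp [Matrix.diagonal_apply_ne _ hij, Matrix.smul_apply]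
  -- block facts
  have hBA : B * A = E * Eᴴ - M * Mᴴ := by
    rw [hA, hB, hE, hM]
    ext i j
    simp [Matrix.mul_apply, Fin.sum_univ_two, Matrix.conjTranspose_apply, Fin.sum_univ_one,
      Matrix.sub_apply, sub_eq_add_neg]
  have hBAT : (B * A) * T = P * T - T * P := by
    rw [hBA, ← hStein, sub_mul, mul_assoc (T * P) Tᴴ T, hTT, mul_one]
  have hJJ : J * J = 1 := by
    rw [hJ, diagonal_mul_diagonal]
    ext i j
    fin_cases i <;> fin_cases j <;> simp [Matrix.diagonal_apply, Matrix.one_apply]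
  have hBJ : B * J = C := by
    rw [hB, hC, hJ]
    ext i p
    rw [Matrix.mul_diagonal]
    fin_cases p <;> simp
  have hBH : Bᴴ = J * A := by
    rw [hB, hA, hJ]
    ext p j
    rw [Matrix.conjTranspose_apply, Matrix.diagonal_mul]
    fin_cases p <;> simp
  have hAH : Aᴴ = C := by
    rw [hA, hC]
    ext j p
    rw [Matrix.conjTranspose_apply]
    fin_cases p <;> simp
  have hPiH : (P⁻¹)ᴴ = P⁻¹ := by
    rw [Matrix.conjTranspose_nonsing_inv, hPH.eq]
  -- resolvent facts
  have hLi : ((1 : Matrix (Fin m) (Fin m) ℂ) - z • Tᴴ)⁻¹ * (1 - z • Tᴴ) = 1 :=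
    Matrix.nonsing_inv_mul _ hz
  have hRi : ((1 : Matrix (Fin m) (Fin m) ℂ) - conj ζ • T) * (1 - conj ζ • T)⁻¹ = 1 :=
    Matrix.mul_nonsing_inv _ hζ'
  have hLζH : (((1 : Matrix (Fin m) (Fin m) ℂ) - ζ • Tᴴ)⁻¹)ᴴ
      = ((1 : Matrix (Fin m) (Fin m) ℂ) - conj ζ • T)⁻¹ := by
    rw [Matrix.conjTranspose_nonsing_inv]
    congr 1
    simp [Matrix.conjTranspose_smul, Complex.star_def]
  have hLT : ((1 : Matrix (Fin m) (Fin m) ℂ) - z • Tᴴ) * T = T - z • 1 := by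
    rw [sub_mul, one_mul, smul_mul_assoc, hTT]
  -- cancellation helpers (on m×2 matrices)
  have cP1 : ∀ X : Matrix (Fin m) (Fin 2) ℂ, P⁻¹ * (P * X) = X := fun X => by
    rw [← Matrix.mul_assoc, Matrix.nonsing_inv_mul P hPinv, Matrix.one_mul]
  have cP2 : ∀ X : Matrix (Fin m) (Fin 2) ℂ, P * (P⁻¹ * X) = X := fun X => by
    rw [← Matrix.mul_assoc, Matrix.mul_nonsing_inv P hPinv, Matrix.one_mul]
  have cL1 : ∀ X : Matrix (Fin m) (Fin 2) ℂ,
      ((1 : Matrix (Fin m) (Fin m) ℂ) - z • Tᴴ)⁻¹ * ((1 - z • Tᴴ) * X) = X := fun X => by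
    rw [← Matrix.mul_assoc, hLi, Matrix.one_mul]
  have cR1 : ∀ X : Matrix (Fin m) (Fin 2) ℂ,
      ((1 : Matrix (Fin m) (Fin m) ℂ) - conj ζ • T) * ((1 - conj ζ • T)⁻¹ * X) = X := fun X => by
    rw [← Matrix.mul_assoc, hRi, Matrix.one_mul]
  have cBA : ∀ X : Matrix (Fin m) (Fin 2) ℂ,
      B * (A * (T * X)) = (P * T - T * P) * X := fun X => by
    rw [← Matrix.mul_assoc, ← Matrix.mul_assoc, ← hBAT, Matrix.mul_assoc B A T]
  -- Θ expansions
  have hΘz' : Θ z = 1 + (z - tN) •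
      (A * ((1 : Matrix (Fin m) (Fin m) ℂ) - z • Tᴴ)⁻¹ * P⁻¹ * G * B) := by
    rw [hΘ z, hDinv]
  have hβ : star (ζ - tN) * (-tN) = -(tN * conj ζ - 1) := by
    simp only [star_sub, Complex.star_def]
    linear_combination htNc
  have hΘζH : (Θ ζ)ᴴ = 1 - (tN * conj ζ - 1) •
      (J * (A * T * G * P⁻¹ * ((1 : Matrix (Fin m) (Fin m) ℂ) - conj ζ • T)⁻¹ * C)) := by
    rw [hΘ ζ, hDinv, Matrix.conjTranspose_add, Matrix.conjTranspose_one,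
      Matrix.conjTranspose_smul]
    have hX : (A * ((1 : Matrix (Fin m) (Fin m) ℂ) - ζ • Tᴴ)⁻¹ * P⁻¹ * G * B)ᴴ
        = (-tN) • (J * (A * T * G * P⁻¹ *
            ((1 : Matrix (Fin m) (Fin m) ℂ) - conj ζ • T)⁻¹ * C)) := by
      simp only [Matrix.conjTranspose_mul]
      rw [hBH, hGH, hPiH, hLζH, hAH]
      simp only [Matrix.smul_mul, Matrix.mul_smul, smul_mul_assoc, mul_smul_comm,
        Matrix.mul_assoc]
    rw [hX, smul_smul, hβ]
    module
  -- abbreviations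
  set Y : Matrix (Fin 2) (Fin 2) ℂ :=
    A * T * G * P⁻¹ * ((1 : Matrix (Fin m) (Fin m) ℂ) - conj ζ • T)⁻¹ * C with hYdef
  set N : Matrix (Fin 2) (Fin 2) ℂ :=
    A * ((1 : Matrix (Fin m) (Fin m) ℂ) - z • Tᴴ)⁻¹ * P⁻¹ * G * B with hNdef
  set K1 : Matrix (Fin m) (Fin m) ℂ :=
    P * (((1 : Matrix (Fin m) (Fin m) ℂ) - z • Tᴴ) * (T * G)) with hK1
  set K2 : Matrix (Fin m) (Fin m) ℂ :=
    G * (((1 : Matrix (Fin m) (Fin m) ℂ) - conj ζ • T) * P) with hK2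
  set K3 : Matrix (Fin m) (Fin m) ℂ :=
    G * ((P * T - T * P) * G) with hK3
  -- expansion of the product
  have hexp : Θ z * J * (Θ ζ)ᴴ
      = J - (tN * conj ζ - 1) • Y + (z - tN) • (N * J)
        - ((z - tN) * (tN * conj ζ - 1)) • (N * Y) := by
    rw [hΘz', hΘζH]
    have h1 : J * (J * Y) = Y := by rw [← Matrix.mul_assoc, hJJ, Matrix.one_mul]
    have h2 : N * J * (J * Y) = N * Y := by rw [Matrix.mul_assoc, h1]
    simp only [add_mul, mul_add, mul_sub, sub_mul, Matrix.one_mul, Matrix.mul_one,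
      Matrix.smul_mul, Matrix.mul_smul, smul_smul, h1, h2]
    module
  have hNJ : N * J = A * ((1 : Matrix (Fin m) (Fin m) ℂ) - z • Tᴴ)⁻¹ * P⁻¹ * G * C := by
    rw [hNdef, Matrix.mul_assoc, hBJ]
  -- sandwich rewrites
  have r1 : Y = A * ((1 : Matrix (Fin m) (Fin m) ℂ) - z • Tᴴ)⁻¹ * P⁻¹ * K1 *
      (P⁻¹ * (((1 : Matrix (Fin m) (Fin m) ℂ) - conj ζ • T)⁻¹ * C)) := by
    rw [hYdef, hK1]
    simp only [Matrix.mul_assoc]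
    rw [cP1, cL1]
  have r2 : A * ((1 : Matrix (Fin m) (Fin m) ℂ) - z • Tᴴ)⁻¹ * P⁻¹ * G * C
      = A * ((1 : Matrix (Fin m) (Fin m) ℂ) - z • Tᴴ)⁻¹ * P⁻¹ * K2 *
        (P⁻¹ * (((1 : Matrix (Fin m) (Fin m) ℂ) - conj ζ • T)⁻¹ * C)) := by
    rw [hK2]
    simp only [Matrix.mul_assoc]
    rw [cP2, cR1]
  have r3 : N * Y = A * ((1 : Matrix (Fin m) (Fin m) ℂ) - z • Tᴴ)⁻¹ * P⁻¹ * K3 *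
      (P⁻¹ * (((1 : Matrix (Fin m) (Fin m) ℂ) - conj ζ • T)⁻¹ * C)) := by
    rw [hNdef, hYdef, hK3]
    simp only [Matrix.mul_assoc]
    rw [cBA]
  -- the sandwiched core identity
  have e1 : (tN • (1 : Matrix (Fin m) (Fin m) ℂ) - T) * K1 *
        (tN • (1 : Matrix (Fin m) (Fin m) ℂ) - T)
      = (tN • (1 : Matrix (Fin m) (Fin m) ℂ) - T) *
          (P * (T - z • (1 : Matrix (Fin m) (Fin m) ℂ))) := by
    rw [hK1]
    simp only [Matrix.mul_assoc]
    rw [hGD, Matrix.mul_one, hLT]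
  have e2 : (tN • (1 : Matrix (Fin m) (Fin m) ℂ) - T) * K2 *
        (tN • (1 : Matrix (Fin m) (Fin m) ℂ) - T)
      = ((1 : Matrix (Fin m) (Fin m) ℂ) - conj ζ • T) *
          (P * (tN • (1 : Matrix (Fin m) (Fin m) ℂ) - T)) := by
    rw [hK2]
    simp only [Matrix.mul_assoc]
    rw [← Matrix.mul_assoc (tN • (1 : Matrix (Fin m) (Fin m) ℂ) - T) G, hDG, Matrix.one_mul]
  have e3 : (tN • (1 : Matrix (Fin m) (Fin m) ℂ) - T) * K3 *
        (tN • (1 : Matrix (Fin m) (Fin m) ℂ) - T) = P * T - T * P := by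
    rw [hK3]
    simp only [Matrix.mul_assoc]
    rw [hGD, Matrix.mul_one, ← Matrix.mul_assoc (tN • (1 : Matrix (Fin m) (Fin m) ℂ) - T) G,
      hDG, Matrix.one_mul]
  have poly : (tN * conj ζ - 1) • ((tN • (1 : Matrix (Fin m) (Fin m) ℂ) - T) *
        (P * (T - z • (1 : Matrix (Fin m) (Fin m) ℂ))))
      - (z - tN) • (((1 : Matrix (Fin m) (Fin m) ℂ) - conj ζ • T) *
        (P * (tN • (1 : Matrix (Fin m) (Fin m) ℂ) - T)))
      + ((z - tN) * (tN * conj ζ - 1)) • (P * T - T * P)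
      = (1 - z * conj ζ) • ((tN • (1 : Matrix (Fin m) (Fin m) ℂ) - T) * P *
          (tN • (1 : Matrix (Fin m) (Fin m) ℂ) - T)) := by
    simp only [mul_sub, sub_mul, mul_add, add_mul, Matrix.smul_mul, Matrix.mul_smul,
      Matrix.mul_one, Matrix.one_mul, smul_sub, sub_smul, smul_smul, smul_add, add_smul,
      Matrix.mul_assoc, one_smul]
    module
  have sand : (tN • (1 : Matrix (Fin m) (Fin m) ℂ) - T) *
        ((tN * conj ζ - 1) • K1 - (z - tN) • K2 + ((z - tN) * (tN * conj ζ - 1)) • K3) *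
        (tN • (1 : Matrix (Fin m) (Fin m) ℂ) - T)
      = (1 - z * conj ζ) • ((tN • (1 : Matrix (Fin m) (Fin m) ℂ) - T) * P *
          (tN • (1 : Matrix (Fin m) (Fin m) ℂ) - T)) := by
    have expand : (tN • (1 : Matrix (Fin m) (Fin m) ℂ) - T) *
        ((tN * conj ζ - 1) • K1 - (z - tN) • K2 + ((z - tN) * (tN * conj ζ - 1)) • K3) *
        (tN • (1 : Matrix (Fin m) (Fin m) ℂ) - T)
        = (tN * conj ζ - 1) • ((tN • (1 : Matrix (Fin m) (Fin m) ℂ) - T) * K1 *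
            (tN • (1 : Matrix (Fin m) (Fin m) ℂ) - T))
          - (z - tN) • ((tN • (1 : Matrix (Fin m) (Fin m) ℂ) - T) * K2 *
            (tN • (1 : Matrix (Fin m) (Fin m) ℂ) - T))
          + ((z - tN) * (tN * conj ζ - 1)) • ((tN • (1 : Matrix (Fin m) (Fin m) ℂ) - T) * K3 *
            (tN • (1 : Matrix (Fin m) (Fin m) ℂ) - T)) := by
      simp only [mul_sub, sub_mul, mul_add, add_mul, Matrix.smul_mul, Matrix.mul_smul,
        smul_smul, one_mul, mul_one]
      module
    rw [expand, e1, e2, e3]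
    exact poly
  have hKrec : ∀ X : Matrix (Fin m) (Fin m) ℂ,
      G * ((tN • (1 : Matrix (Fin m) (Fin m) ℂ) - T) * X *
        (tN • (1 : Matrix (Fin m) (Fin m) ℂ) - T)) * G = X := by
    intro X
    calc G * ((tN • (1 : Matrix (Fin m) (Fin m) ℂ) - T) * X *
          (tN • (1 : Matrix (Fin m) (Fin m) ℂ) - T)) * G
        = (G * (tN • (1 : Matrix (Fin m) (Fin m) ℂ) - T)) *
            (X * ((tN • (1 : Matrix (Fin m) (Fin m) ℂ) - T) * G)) := by
          simp only [Matrix.mul_assoc]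
      _ = X := by rw [hGD, hDG, Matrix.one_mul, Matrix.mul_one]
  have core : (tN * conj ζ - 1) • K1 - (z - tN) • K2 + ((z - tN) * (tN * conj ζ - 1)) • K3
      = (1 - z * conj ζ) • P := by
    calc (tN * conj ζ - 1) • K1 - (z - tN) • K2 + ((z - tN) * (tN * conj ζ - 1)) • K3
        = G * ((tN • (1 : Matrix (Fin m) (Fin m) ℂ) - T) *
            ((tN * conj ζ - 1) • K1 - (z - tN) • K2 + ((z - tN) * (tN * conj ζ - 1)) • K3) *
            (tN • (1 : Matrix (Fin m) (Fin m) ℂ) - T)) * G := (hKrec _).symm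
      _ = G * ((1 - z * conj ζ) • ((tN • (1 : Matrix (Fin m) (Fin m) ℂ) - T) * P *
            (tN • (1 : Matrix (Fin m) (Fin m) ℂ) - T))) * G := by rw [sand]
      _ = (1 - z * conj ζ) • (G * ((tN • (1 : Matrix (Fin m) (Fin m) ℂ) - T) * P *
            (tN • (1 : Matrix (Fin m) (Fin m) ℂ) - T)) * G) := by
          simp only [Matrix.smul_mul, Matrix.mul_smul]
      _ = (1 - z * conj ζ) • P := by rw [hKrec]
  -- main identity
  have main : J - Θ z * J * (Θ ζ)ᴴ
      = (1 - z * conj ζ) • (A * ((1 : Matrix (Fin m) (Fin m) ℂ) - z • Tᴴ)⁻¹ * P⁻¹ *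
          ((1 : Matrix (Fin m) (Fin m) ℂ) - conj ζ • T)⁻¹ * C) := by
    rw [hexp]
    have step : J - (J - (tN * conj ζ - 1) • Y + (z - tN) • (N * J)
          - ((z - tN) * (tN * conj ζ - 1)) • (N * Y))
        = (tN * conj ζ - 1) • Y - (z - tN) • (N * J)
          + ((z - tN) * (tN * conj ζ - 1)) • (N * Y) := by module
    rw [step, r3, hNJ, r2, r1]
    calc (tN * conj ζ - 1) • (A * ((1 : Matrix (Fin m) (Fin m) ℂ) - z • Tᴴ)⁻¹ * P⁻¹ * K1 *
            (P⁻¹ * (((1 : Matrix (Fin m) (Fin m) ℂ) - conj ζ • T)⁻¹ * C)))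
          - (z - tN) • (A * ((1 : Matrix (Fin m) (Fin m) ℂ) - z • Tᴴ)⁻¹ * P⁻¹ * K2 *
            (P⁻¹ * (((1 : Matrix (Fin m) (Fin m) ℂ) - conj ζ • T)⁻¹ * C)))
          + ((z - tN) * (tN * conj ζ - 1)) •
            (A * ((1 : Matrix (Fin m) (Fin m) ℂ) - z • Tᴴ)⁻¹ * P⁻¹ * K3 *
            (P⁻¹ * (((1 : Matrix (Fin m) (Fin m) ℂ) - conj ζ • T)⁻¹ * C)))
        = A * ((1 : Matrix (Fin m) (Fin m) ℂ) - z • Tᴴ)⁻¹ * P⁻¹ *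
            ((tN * conj ζ - 1) • K1 - (z - tN) • K2 + ((z - tN) * (tN * conj ζ - 1)) • K3) *
            (P⁻¹ * (((1 : Matrix (Fin m) (Fin m) ℂ) - conj ζ • T)⁻¹ * C)) := by
          simp only [Matrix.mul_sub, Matrix.sub_mul, Matrix.mul_add, Matrix.add_mul,
            Matrix.mul_smul, Matrix.smul_mul]
      _ = A * ((1 : Matrix (Fin m) (Fin m) ℂ) - z • Tᴴ)⁻¹ * P⁻¹ * ((1 - z * conj ζ) • P) *
            (P⁻¹ * (((1 : Matrix (Fin m) (Fin m) ℂ) - conj ζ • T)⁻¹ * C)) := by rw [core]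
      _ = (1 - z * conj ζ) • (A * ((1 : Matrix (Fin m) (Fin m) ℂ) - z • Tᴴ)⁻¹ * P⁻¹ *
            ((1 : Matrix (Fin m) (Fin m) ℂ) - conj ζ • T)⁻¹ * C) := by
          have hfin : A * ((1 : Matrix (Fin m) (Fin m) ℂ) - z • Tᴴ)⁻¹ * P⁻¹ * P *
              (P⁻¹ * (((1 : Matrix (Fin m) (Fin m) ℂ) - conj ζ • T)⁻¹ * C))
              = A * ((1 : Matrix (Fin m) (Fin m) ℂ) - z • Tᴴ)⁻¹ * P⁻¹ *
                ((1 : Matrix (Fin m) (Fin m) ℂ) - conj ζ • T)⁻¹ * C := by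
            simp only [Matrix.mul_assoc]
            rw [cP2]
          rw [Matrix.mul_smul, Matrix.smul_mul, hfin]
  rw [main, smul_smul, inv_mul_cancel₀ hzζ1, one_smul]
end

section
/- With the same setup (T = diag(t₁,…,t_{n-1}) distinct unimodular, P invertible Hermitian with P - T·P·T* = E·E* - M·M*, t_n unimodular distinct from the t_i, Θ(z) = I₂ + (z - t_n)·[E*; M*]·(I - z·T*)⁻¹·P⁻¹·(t_n·I - T)⁻¹·[E, -M]), the determinant of Θ(z) equals 1 for every z ∈ ℂ \ {t₁,…,t_{n-1}}. -/
open Matrix Complex ComplexConjugate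

private lemma key_matrix_id (n : ℕ) (z tN : ℂ) (T P : Matrix (Fin n) (Fin n) ℂ) :
    (tN • 1 - T) * P * (1 - z • Tᴴ) + (z - tN) • (P - T * P * Tᴴ)
      = (z • 1 - T) * P * (1 - tN • Tᴴ) := by
  simp only [Matrix.sub_mul, Matrix.mul_sub, sub_smul, smul_sub, Matrix.mul_one,
    Matrix.one_mul, Matrix.smul_mul, Matrix.mul_smul, smul_smul, Matrix.mul_assoc]
  module

theorem det_theta_eq_one (m : ℕ) (t : Fin m → ℂ) (w : Fin m → ℂ) (tN : ℂ)
    (ht : ∀ i, ‖t i‖ = 1) (hw : ∀ i, ‖w i‖ = 1)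
    (htinj : Function.Injective t)
    (htN : ‖tN‖ = 1) (htNt : ∀ i, tN ≠ t i)
    (T : Matrix (Fin m) (Fin m) ℂ) (hT : T = Matrix.diagonal t)
    (A : Matrix (Fin 2) (Fin m) ℂ)
    (hA : A = Matrix.of fun p j => if p = 0 then (1 : ℂ) else conj (w j))
    (B : Matrix (Fin m) (Fin 2) ℂ)
    (hB : B = Matrix.of fun j p => if p = 0 then (1 : ℂ) else -(w j))
    (E M : Matrix (Fin m) (Fin 1) ℂ)
    (hE : E = Matrix.of fun _ _ => (1 : ℂ))
    (hM : M = Matrix.of fun i _ => w i)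
    (P : Matrix (Fin m) (Fin m) ℂ) (hPH : P.IsHermitian) (hPinv : IsUnit P.det)
    (hStein : P - T * P * Tᴴ = E * Eᴴ - M * Mᴴ)
    (Θ : ℂ → Matrix (Fin 2) (Fin 2) ℂ)
    (hΘ : ∀ z, Θ z = 1 + (z - tN) •
      (A * (1 - z • Tᴴ)⁻¹ * P⁻¹ * (tN • (1 : Matrix (Fin m) (Fin m) ℂ) - T)⁻¹ * B))
    (z : ℂ) (hz : ∀ i, z ≠ t i) :
    (Θ z).det = 1 := by
  -- unimodularity facts
  have hc : ∀ i, t i * conj (t i) = 1 := by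
    intro i
    rw [Complex.mul_conj, Complex.normSq_eq_norm_sq, ht i]
    norm_num
  have hcne : ∀ i, conj (t i) ≠ 0 := by
    intro i h
    have h1 := hc i
    rw [h, mul_zero] at h1
    exact zero_ne_one h1
  have hz2 : ∀ i, (1 : ℂ) - z * conj (t i) ≠ 0 := by
    intro i h
    apply hz i
    apply mul_right_cancel₀ (hcne i)
    rw [hc i, ← sub_eq_zero.mp h]
  have hzN : ∀ i, (1 : ℂ) - tN * conj (t i) ≠ 0 := by
    intro i h
    apply htNt i
    apply mul_right_cancel₀ (hcne i)
    rw [hc i, ← sub_eq_zero.mp h]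
  have hz1 : ∀ i, tN - t i ≠ 0 := fun i => sub_ne_zero.mpr (htNt i)
  have hz3 : ∀ i, z - t i ≠ 0 := fun i => sub_ne_zero.mpr (hz i)
  -- diagonal descriptions
  have hTH : Tᴴ = Matrix.diagonal (fun i => conj (t i)) := by
    rw [hT, Matrix.diagonal_conjTranspose]
    rfl
  have hD1 : tN • (1 : Matrix (Fin m) (Fin m) ℂ) - T
      = Matrix.diagonal (fun i => tN - t i) := by
    rw [hT]
    ext i j
    by_cases h : i = j <;> simp [Matrix.diagonal, Matrix.one_apply, h]
  have hD2 : (1 : Matrix (Fin m) (Fin m) ℂ) - z • Tᴴ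
      = Matrix.diagonal (fun i => 1 - z * conj (t i)) := by
    rw [hTH]
    ext i j
    by_cases h : i = j <;> simp [Matrix.diagonal, Matrix.one_apply, h]
  have hD3 : z • (1 : Matrix (Fin m) (Fin m) ℂ) - T
      = Matrix.diagonal (fun i => z - t i) := by
    rw [hT]
    ext i j
    by_cases h : i = j <;> simp [Matrix.diagonal, Matrix.one_apply, h]
  have hD4 : (1 : Matrix (Fin m) (Fin m) ℂ) - tN • Tᴴ
      = Matrix.diagonal (fun i => 1 - tN * conj (t i)) := by
    rw [hTH]
    ext i j
    by_cases h : i = j <;> simp [Matrix.diagonal, Matrix.one_apply, h]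
  have hU1 : IsUnit (tN • (1 : Matrix (Fin m) (Fin m) ℂ) - T).det := by
    rw [hD1, Matrix.det_diagonal, isUnit_iff_ne_zero]
    exact Finset.prod_ne_zero_iff.mpr fun i _ => hz1 i
  have hU2 : IsUnit ((1 : Matrix (Fin m) (Fin m) ℂ) - z • Tᴴ).det := by
    rw [hD2, Matrix.det_diagonal, isUnit_iff_ne_zero]
    exact Finset.prod_ne_zero_iff.mpr fun i _ => hz2 i
  -- B * A equals the Stein term
  have hBA : B * A = P - T * P * Tᴴ := by
    rw [hStein, hA, hB, hE, hM]
    ext j k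
    simp [Matrix.mul_apply, Matrix.conjTranspose_apply, Fin.sum_univ_two,
      Fin.sum_univ_one, sub_eq_add_neg]
  -- abbreviation
  set X : Matrix (Fin m) (Fin m) ℂ :=
    ((1 : Matrix (Fin m) (Fin m) ℂ) - z • Tᴴ)⁻¹ * P⁻¹ *
      (tN • (1 : Matrix (Fin m) (Fin m) ℂ) - T)⁻¹ with hXdef
  -- swap inside the determinant
  have hswap : (Θ z).det = (1 + ((z - tN) • (X * B)) * A).det := by
    rw [hΘ z]
    rw [show (z - tN) • (A * ((1 : Matrix (Fin m) (Fin m) ℂ) - z • Tᴴ)⁻¹ * P⁻¹ *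
        (tN • (1 : Matrix (Fin m) (Fin m) ℂ) - T)⁻¹ * B)
        = A * ((z - tN) • (X * B)) by
      rw [hXdef, Matrix.mul_smul]
      simp only [Matrix.mul_assoc]]
    exact Matrix.det_one_add_mul_comm A _
  have hXB : ((z - tN) • (X * B)) * A = (z - tN) • (X * (P - T * P * Tᴴ)) := by
    rw [Matrix.smul_mul, Matrix.mul_assoc, hBA]
  -- X * (D1 * P * D2) = 1
  have hXinv : X * ((tN • (1 : Matrix (Fin m) (Fin m) ℂ) - T) * P *
      ((1 : Matrix (Fin m) (Fin m) ℂ) - z • Tᴴ)) = 1 := by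
    rw [hXdef]
    simp only [Matrix.mul_assoc]
    rw [Matrix.nonsing_inv_mul_cancel_left _ _ hU1,
      Matrix.nonsing_inv_mul_cancel_left _ _ hPinv,
      Matrix.nonsing_inv_mul _ hU2]
  have hfinal : (1 : Matrix (Fin m) (Fin m) ℂ) + (z - tN) • (X * (P - T * P * Tᴴ))
      = X * ((z • (1 : Matrix (Fin m) (Fin m) ℂ) - T) * P *
          ((1 : Matrix (Fin m) (Fin m) ℂ) - tN • Tᴴ)) := by
    rw [← key_matrix_id m z tN T P, Matrix.mul_add, hXinv, Matrix.mul_smul]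
  -- put it together
  rw [hswap, hXB, hfinal]
  have hPd : P.det ≠ 0 := isUnit_iff_ne_zero.mp hPinv
  rw [Matrix.det_mul, hXdef, Matrix.det_mul, Matrix.det_mul, Matrix.det_mul,
    Matrix.det_mul, Matrix.det_nonsing_inv, Matrix.det_nonsing_inv,
    Matrix.det_nonsing_inv, Ring.inverse_eq_inv, Ring.inverse_eq_inv,
    Ring.inverse_eq_inv, hD1, hD2, hD3, hD4, Matrix.det_diagonal,
    Matrix.det_diagonal, Matrix.det_diagonal, Matrix.det_diagonal]
  have hprod : (∏ i, (z - t i)) * ∏ i, (1 - tN * conj (t i))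
      = (∏ i, (1 - z * conj (t i))) * ∏ i, (tN - t i) := by
    rw [← Finset.prod_mul_distrib, ← Finset.prod_mul_distrib]
    exact Finset.prod_congr rfl fun i _ => by linear_combination (tN - z) * hc i
  have hp1 : (∏ i, (tN - t i)) ≠ 0 := Finset.prod_ne_zero_iff.mpr fun i _ => hz1 i
  have hp2 : (∏ i, ((1 : ℂ) - z * conj (t i))) ≠ 0 :=
    Finset.prod_ne_zero_iff.mpr fun i _ => hz2 i
  field_simp
  linear_combination hprod
end

section
/- Let f be a finite Blaschke product, i.e., f(z) = c·∏_{i=1}^{k}(z - a_i)/(1 - z·conj(a_i)) with |c| = 1 and |a_i| < 1 for all i. Then for every point t on the unit circle, t·f'(t)·conj(f(t)) = |f'(t)|, and this quantity equals the limit as z → t of (1 - |f(z)|²)/(1 - |z|²). -/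
open Complex ComplexConjugate Topology Filter

private lemma blaschke_key (z w : ℂ) :
    Complex.normSq (1 - z * conj w) - Complex.normSq (z - w)
      = (1 - Complex.normSq z) * (1 - Complex.normSq w) := by
  have h : ((Complex.normSq (1 - z * conj w) - Complex.normSq (z - w) : ℝ) : ℂ)
      = (((1 - Complex.normSq z) * (1 - Complex.normSq w) : ℝ) : ℂ) := by
    push_cast
    rw [← Complex.mul_conj, ← Complex.mul_conj, ← Complex.mul_conj, ← Complex.mul_conj]
    simp only [map_sub, map_mul, map_one, Complex.conj_conj]
    ring
  exact_mod_cast h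

private lemma blaschke_term (t w : ℂ) (ht : (t * conj t : ℂ) = 1)
    (h1 : (1 : ℂ) - t * conj w ≠ 0) :
    t * conj ((t - w) / (1 - t * conj w))
        * ((1 - (Complex.normSq w : ℂ)) / (1 - t * conj w) ^ 2)
      = ((1 - Complex.normSq w) / Complex.normSq (1 - t * conj w) : ℝ) := by
  have h3 : t * conj (t - w) = 1 - t * conj w := by
    rw [map_sub, mul_sub, ht]
  rw [map_div₀, mul_div_assoc' t (conj (t - w)) (conj (1 - t * conj w)), h3,
    Complex.ofReal_div, Complex.ofReal_sub, Complex.ofReal_one,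
    ← Complex.mul_conj (1 - t * conj w), div_mul_div_comm]
  have h4 : conj (1 - t * conj w) * (1 - t * conj w) ^ 2
      = (1 - t * conj w) * ((1 - t * conj w) * conj (1 - t * conj w)) := by ring
  rw [h4, mul_div_mul_left _ _ h1]

theorem blaschke_boundary_derivative (k : ℕ) (c : ℂ) (a : Fin k → ℂ)
    (hc : ‖c‖ = 1) (ha : ∀ i, ‖a i‖ < 1)
    (f : ℂ → ℂ)
    (hf : f = fun z => c * ∏ i, (z - a i) / (1 - z * conj (a i)))
    (t : ℂ) (ht : ‖t‖ = 1) :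
    t * deriv f t * conj (f t) = ((‖deriv f t‖ : ℝ) : ℂ) ∧
      Tendsto (fun z => (1 - ‖f z‖ ^ 2) / (1 - ‖z‖ ^ 2))
        (𝓝[{z : ℂ | ‖z‖ ≠ 1}] t) (𝓝 ‖deriv f t‖) := by
  classical
  have hnt : Complex.normSq t = 1 := by
    rw [← Complex.sq_norm, ht]; norm_num
  have htt : t * conj t = 1 := by
    rw [Complex.mul_conj, hnt, Complex.ofReal_one]
  have hden : ∀ w : ℂ, ‖w‖ < 1 → (1 : ℂ) - t * conj w ≠ 0 := by
    intro w hw h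
    have h1 : t * conj w = 1 := by linear_combination -h
    have h2 := congrArg norm h1
    rw [norm_mul, ht, one_mul, Complex.norm_conj, norm_one] at h2
    rw [h2] at hw; exact lt_irrefl _ hw
  have hqe : ∀ w : ℂ, Complex.normSq (1 - t * conj w) = Complex.normSq (t - w) := by
    intro w
    have h := blaschke_key t w
    rw [hnt] at h
    simp only [sub_self, zero_mul] at h
    linarith
  have htw : ∀ w : ℂ, ‖w‖ < 1 → t - w ≠ 0 := by
    intro w hw h
    rw [sub_eq_zero] at h
    rw [← h, ht] at hw
    exact lt_irrefl _ hw
  set g : Fin k → ℂ → ℂ := fun i z => (z - a i) / (1 - z * conj (a i)) with hg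
  have hf' : f = fun z => c * ∏ i, g i z := hf
  have hane : ∀ i, (1 : ℂ) - t * conj (a i) ≠ 0 := fun i => hden _ (ha i)
  set d : Fin k → ℂ := fun i => (1 - (Complex.normSq (a i) : ℂ)) / (1 - t * conj (a i)) ^ 2
    with hd
  have hgd : ∀ i, HasDerivAt (g i) (d i) t := by
    intro i
    have h1 : HasDerivAt (fun z : ℂ => z - a i) 1 t := (hasDerivAt_id t).sub_const _
    have h2 : HasDerivAt (fun z : ℂ => 1 - z * conj (a i)) (-conj (a i)) t := by
      simpa using ((hasDerivAt_id t).mul_const (conj (a i))).const_sub 1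
    have h3 := h1.div h2 (hane i)
    have h4 : (1 * (1 - t * conj (a i)) - (t - a i) * -conj (a i)) / (1 - t * conj (a i)) ^ 2
        = d i := by
      rw [hd]
      simp only
      congr 1
      rw [← Complex.mul_conj]
      ring
    rw [h4] at h3
    exact h3
  have hfd : HasDerivAt f (c * ∑ i, (∏ j ∈ Finset.univ.erase i, g j t) * d i) t := by
    rw [hf']
    have h1 := (HasDerivAt.finset_prod (u := (Finset.univ : Finset (Fin k)))
      fun i _ => hgd i).const_mul c
    simpa [smul_eq_mul] using h1
  set S : ℝ := ∑ i, (1 - Complex.normSq (a i)) / Complex.normSq (1 - t * conj (a i)) with hS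
  have hu1 : ∀ i, g i t * conj (g i t) = 1 := by
    intro i
    rw [Complex.mul_conj, hg]
    simp only
    rw [map_div₀, ← hqe (a i), div_self, Complex.ofReal_one]
    exact fun h => hane i (Complex.normSq_eq_zero.1 h)
  have hcc : c * conj c = 1 := by
    rw [Complex.mul_conj]
    norm_cast
    rw [← Complex.sq_norm, hc]; norm_num
  have hft : f t * conj (f t) = 1 := by
    rw [hf']
    simp only
    rw [map_mul, map_prod]
    calc c * (∏ i, g i t) * (conj c * ∏ i, conj (g i t))
        = (c * conj c) * ((∏ i, g i t) * ∏ i, conj (g i t)) := by ring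
      _ = 1 := by
          rw [hcc, ← Finset.prod_mul_distrib, Finset.prod_congr rfl fun i _ => hu1 i]
          simp
  have habsft : ‖f t‖ = 1 := by
    have h1 := congrArg norm hft
    rw [norm_mul, Complex.norm_conj, norm_one] at h1
    nlinarith [norm_nonneg (f t)]
  have hmain : t * deriv f t * conj (f t) = ((S : ℝ) : ℂ) := by
    rw [hfd.deriv, hf']
    simp only [map_mul, map_prod]
    rw [hS, Complex.ofReal_sum]
    rw [Finset.mul_sum, Finset.mul_sum, Finset.sum_mul]
    apply Finset.sum_congr rfl
    intro i _
    have hP : (∏ j ∈ Finset.univ.erase i, g j t) * ∏ j, conj (g j t) = conj (g i t) := by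
      rw [← Finset.mul_prod_erase Finset.univ (fun j => conj (g j t)) (Finset.mem_univ i)]
      calc (∏ j ∈ Finset.univ.erase i, g j t)
            * (conj (g i t) * ∏ j ∈ Finset.univ.erase i, conj (g j t))
          = conj (g i t) * ∏ j ∈ Finset.univ.erase i, (g j t * conj (g j t)) := by
            rw [Finset.prod_mul_distrib]; ring
        _ = conj (g i t) := by
            rw [Finset.prod_congr rfl fun j _ => hu1 j]; simp
    calc t * (c * ((∏ j ∈ Finset.univ.erase i, g j t) * d i)) * (conj c * ∏ j, conj (g j t))
        = (c * conj c) * (t * ((∏ j ∈ Finset.univ.erase i, g j t) * ∏ j, conj (g j t)) * d i) := by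
          ring
      _ = t * conj (g i t) * d i := by rw [hcc, hP, one_mul]
      _ = (((1 - Complex.normSq (a i)) / Complex.normSq (1 - t * conj (a i)) : ℝ) : ℂ) := by
          rw [hg, hd]
          simp only
          exact blaschke_term t (a i) htt (hane i)
  have hS0 : 0 ≤ S := by
    rw [hS]
    apply Finset.sum_nonneg
    intro i _
    apply div_nonneg
    · rw [← Complex.sq_norm]
      nlinarith [ha i, norm_nonneg (a i)]
    · exact Complex.normSq_nonneg _
  have habs : ‖deriv f t‖ = S := by
    have h1 := congrArg norm hmain
    rw [norm_mul, norm_mul, ht, Complex.norm_conj, habsft, one_mul, mul_one,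
      Complex.norm_real, Real.norm_of_nonneg hS0] at h1
    exact h1
  constructor
  · rw [habs]; exact hmain
  · rw [habs]
    set b : ℕ → ℂ := fun n => if h : n < k then a ⟨n, h⟩ else 0 with hb
    have hba : ∀ i : Fin k, b ↑i = a i := by
      intro i
      rw [hb]
      simp only [i.isLt, dif_pos]
    have hb1 : ∀ n, ‖b n‖ < 1 := by
      intro n
      rw [hb]
      by_cases h : n < k
      · simp only [h, dif_pos]; exact ha _
      · simp only [h, dif_neg, not_false_iff, map_zero]; norm_num
    set q : ℂ → ℕ → ℝ := fun z j => Complex.normSq ((z - b j) / (1 - z * conj (b j))) with hq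
    have hfq : ∀ z, Complex.normSq (f z) = ∏ j ∈ Finset.range k, q z j := by
      intro z
      rw [hf']
      simp only
      rw [map_mul, map_prod]
      have h0 : Complex.normSq c = 1 := by
        rw [← Complex.sq_norm, hc]; norm_num
      rw [h0, one_mul]
      rw [← Fin.prod_univ_eq_prod_range (fun n => q z n) k]
      apply Finset.prod_congr rfl
      intro i _
      rw [hq, hg]
      simp only
      rw [hba i]
    have htel : ∀ z, 1 - Complex.normSq (f z)
        = ∑ i ∈ Finset.range k, (∏ j ∈ Finset.range i, q z j) * (1 - q z i) := by
      intro z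
      rw [hfq]
      have h1 := Finset.sum_range_sub (fun n => ∏ j ∈ Finset.range n, q z j) k
      have h2 : ∀ i ∈ Finset.range k,
          ((∏ j ∈ Finset.range (i + 1), q z j) - ∏ j ∈ Finset.range i, q z j)
            = -((∏ j ∈ Finset.range i, q z j) * (1 - q z i)) := by
        intro i _
        rw [Finset.prod_range_succ]
        ring
      rw [Finset.sum_congr rfl h2, Finset.sum_neg_distrib] at h1
      simp only [Finset.range_zero, Finset.prod_empty] at h1
      linarith
    have hbne : ∀ n, (1 : ℂ) - t * conj (b n) ≠ 0 := fun n => hden _ (hb1 n)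
    have hfac : ∀ (z : ℂ) (i : ℕ), (1 : ℂ) - z * conj (b i) ≠ 0 →
        1 - q z i = (1 - Complex.normSq z)
          * ((1 - Complex.normSq (b i)) / Complex.normSq (1 - z * conj (b i))) := by
      intro z i h
      have hn : Complex.normSq (1 - z * conj (b i)) ≠ 0 := by
        simpa [Complex.normSq_eq_zero] using h
      rw [hq]
      simp only
      rw [map_div₀]
      field_simp
      linear_combination blaschke_key z (b i)
    have hqt : ∀ j, q t j = 1 := by
      intro j
      have hz : Complex.normSq (t - b j) ≠ 0 :=
        fun h => htw _ (hb1 j) (Complex.normSq_eq_zero.1 h)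
      rw [hq]
      simp only
      rw [map_div₀, hqe (b j), div_self hz]
    have hSrange : S = ∑ i ∈ Finset.range k,
        (1 - Complex.normSq (b i)) / Complex.normSq (1 - t * conj (b i)) := by
      rw [hS, ← Fin.sum_univ_eq_sum_range
        (fun n => (1 - Complex.normSq (b n)) / Complex.normSq (1 - t * conj (b n))) k]
      apply Finset.sum_congr rfl
      intro i _
      rw [hba i]
    set H : ℂ → ℝ := fun z => ∑ i ∈ Finset.range k,
        (∏ j ∈ Finset.range i, q z j)
          * ((1 - Complex.normSq (b i)) / Complex.normSq (1 - z * conj (b i))) with hH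
    have hHt : H t = S := by
      rw [hH, hSrange]
      simp only
      apply Finset.sum_congr rfl
      intro i _
      rw [Finset.prod_eq_one fun j _ => hqt j, one_mul]
    have hqc : ∀ j, ContinuousAt (fun z => q z j) t := by
      intro j
      rw [hq]
      simp only
      apply Complex.continuous_normSq.continuousAt.comp
      exact ContinuousAt.div (by fun_prop) (by fun_prop) (hbne j)
    have hden2 : ∀ i : ℕ, ContinuousAt
        (fun z : ℂ => ((1 - Complex.normSq (b i)) / Complex.normSq (1 - z * conj (b i)) : ℝ)) t := by
      intro i
      apply ContinuousAt.div continuousAt_const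
      · exact Complex.continuous_normSq.continuousAt.comp (by fun_prop)
      · simpa [Complex.normSq_eq_zero] using hbne i
    have hprodc : ∀ i : ℕ, ContinuousAt (fun z => ∏ j ∈ Finset.range i, q z j) t :=
      fun i => tendsto_finset_prod _ fun j _ => hqc j
    have hHcont : ContinuousAt H t := by
      rw [hH]
      exact tendsto_finset_sum _ fun i _ => (hprodc i).mul (hden2 i)
    have hHeq : ∀ z : ℂ, (∀ n, (1 : ℂ) - z * conj (b n) ≠ 0) → ‖z‖ ≠ 1 →
        (1 - ‖f z‖ ^ 2) / (1 - ‖z‖ ^ 2) = H z := by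
      intro z hz hz1
      have hz2 : 1 - Complex.normSq z ≠ 0 := by
        intro h
        apply hz1
        have h3 : ‖z‖ ^ 2 = 1 := by rw [Complex.sq_norm]; linarith
        have h4 : (‖z‖ - 1) * (‖z‖ + 1) = 0 := by linear_combination h3
        rcases mul_eq_zero.1 h4 with h5 | h5
        · linarith
        · nlinarith [norm_nonneg z]
      rw [Complex.sq_norm, Complex.sq_norm, htel z, Finset.sum_div, hH]
      simp only
      apply Finset.sum_congr rfl
      intro i _
      rw [hfac z i (hz i), mul_div_assoc, mul_div_cancel_left₀ _ hz2]
    have hev : ∀ᶠ z in 𝓝 t, ∀ n, (1 : ℂ) - z * conj (b n) ≠ 0 := by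
      have h1 : ∀ᶠ z in 𝓝 t, ∀ i ∈ Finset.range k, (1 : ℂ) - z * conj (b i) ≠ 0 := by
        rw [eventually_all_finset]
        intro i _
        have h2 : ContinuousAt (fun z : ℂ => 1 - z * conj (b i)) t := by fun_prop
        exact h2.eventually_ne (hbne i)
      filter_upwards [h1] with z hz n
      by_cases h : n < k
      · exact hz n (Finset.mem_range.2 h)
      · rw [hb]
        simp only [h, dif_neg, not_false_iff, map_zero, mul_zero, sub_zero]
        norm_num
    have hHtend : Tendsto H (𝓝[{z : ℂ | ‖z‖ ≠ 1}] t) (𝓝 S) := by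
      rw [← hHt]
      exact hHcont.tendsto.mono_left nhdsWithin_le_nhds
    apply hHtend.congr'
    filter_upwards [hev.filter_mono nhdsWithin_le_nhds, self_mem_nhdsWithin] with z hz hz1
    exact (hHeq z hz hz1).symm
end

section
/- Let f be a finite Blaschke product of degree k and let t₁,…,tₙ be distinct points in the closed unit disk. Define the Schwarz–Pick matrix P = [p(t_i,t_j)] where p(t_i,t_j) = t_i·f'(t_i)·conj(f(t_i)) if i = j and |t_i| = 1, and p(t_i,t_j) = (1 - f(t_i)·conj(f(t_j)))/(1 - t_i·conj(t_j)) otherwise. Then P is positive semidefinite and rank P = min(n, k). -/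
open Complex ComplexConjugate Matrix Polynomial
open scoped ComplexOrder
namespace SPM

lemma ne_one' {z w : ℂ} (hz : ‖z‖ ≤ 1) (hw : ‖w‖ < 1) :
    1 - z * conj w ≠ 0 := by
  intro h
  have h1 : z * conj w = 1 := by linear_combination -h
  have : ‖z * conj w‖ < 1 := by
    rw [norm_mul, Complex.norm_conj]
    calc ‖z‖ * ‖w‖ ≤ 1 * ‖w‖ := by
          exact mul_le_mul_of_nonneg_right hz (norm_nonneg _)
      _ < 1 := by simpa using hw
  rw [h1] at this; simp at this

lemma ne_one'' {z w : ℂ} (hz : ‖z‖ ≤ 1) (hw : ‖w‖ ≤ 1)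
    (hzw : z ≠ w) : 1 - z * conj w ≠ 0 := by
  intro h
  have h1 : z * conj w = 1 := by linear_combination -h
  have habs : ‖z‖ * ‖w‖ = 1 := by
    have := congrArg (fun x : ℂ => ‖x‖) h1
    rwa [norm_mul, Complex.norm_conj, norm_one] at this
  have hz1 : ‖w‖ = 1 := by nlinarith [norm_nonneg z, norm_nonneg w]
  have hw1 : w * conj w = 1 := by
    rw [Complex.mul_conj]
    norm_cast
    rw [← Complex.sq_norm, hz1]; norm_num
  have hcw : conj w ≠ 0 := by
    intro h0
    rw [h0, mul_zero] at h1; simp at h1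
  exact hzw (mul_right_cancel₀ hcw (h1.trans hw1.symm))

lemma telescope {k : ℕ} (β : Fin k → ℂ) :
    1 - ∏ m, β m = ∑ m, (∏ l ∈ Finset.Iio m, β l) * (1 - β m) := by
  set F : ℕ → ℂ := fun j => ∏ l ∈ Finset.univ.filter (fun l : Fin k => (l : ℕ) < j), β l with hF
  have hF0 : F 0 = 1 := by simp [hF]
  have hFk : F k = ∏ m, β m := by
    apply Finset.prod_congr _ (fun _ _ => rfl)
    ext l; simp [l.isLt]
  have key : ∀ m : Fin k, (∏ l ∈ Finset.Iio m, β l) * (1 - β m) = F m - F (m + 1) := by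
    intro m
    have h1 : F (m : ℕ) = ∏ l ∈ Finset.Iio m, β l := by
      apply Finset.prod_congr _ (fun _ _ => rfl)
      ext l
      simp only [Finset.mem_filter, Finset.mem_univ, true_and, Finset.mem_Iio, Fin.lt_def]
    have h2 : F ((m : ℕ) + 1) = F (m : ℕ) * β m := by
      have hset : Finset.univ.filter (fun l : Fin k => (l : ℕ) < (m : ℕ) + 1)
          = insert m (Finset.univ.filter (fun l : Fin k => (l : ℕ) < (m : ℕ))) := by
        ext l
        simp only [Finset.mem_filter, Finset.mem_univ, true_and, Finset.mem_insert]
        constructor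
        · intro h
          rcases Nat.lt_succ_iff_lt_or_eq.mp h with h | h
          · exact Or.inr h
          · exact Or.inl (Fin.ext h)
        · rintro (rfl | h)
          · omega
          · omega
      rw [hF]
      simp only
      rw [hset, Finset.prod_insert (by simp)]
      ring
    rw [h2, h1]; ring
  calc 1 - ∏ m, β m = F 0 - F k := by rw [hF0, hFk]
    _ = ∑ i ∈ Finset.range k, (F i - F (i + 1)) := (Finset.sum_range_sub' F k).symm
    _ = ∑ m : Fin k, (F m - F (m + 1)) :=
        (Fin.sum_univ_eq_sum_range (fun i => F i - F (i + 1)) k).symm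
    _ = ∑ m, (∏ l ∈ Finset.Iio m, β l) * (1 - β m) := by
        exact Finset.sum_congr rfl (fun m _ => (key m).symm)


variable {k : ℕ}

noncomputable def bl (a z : ℂ) : ℂ := (z - a) / (1 - z * conj a)

noncomputable def pq (a : Fin k → ℂ) (m : Fin k) : Polynomial ℂ :=
  (∏ l ∈ Finset.Iio m, (X - C (a l))) * (∏ l ∈ Finset.Ioi m, (1 - C (conj (a l)) * X))

noncomputable def r (a : Fin k → ℂ) (m : Fin k) : ℂ :=
  ((Real.sqrt (1 - ‖a m‖ ^ 2) : ℝ) : ℂ)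

noncomputable def g (a : Fin k → ℂ) (m : Fin k) (z : ℂ) : ℂ :=
  r a m * (pq a m).eval z / ∏ l, (1 - z * conj (a l))

lemma prod_split (h : Fin k → ℂ) (m : Fin k) :
    ∏ l, h l = ((∏ l ∈ Finset.Iio m, h l) * h m) * ∏ l ∈ Finset.Ioi m, h l := by
  rw [Finset.prod_Iio_mul_eq_prod_Iic]
  rw [← Finset.prod_union (by simp [Finset.disjoint_left])]
  apply Finset.prod_congr _ (fun _ _ => rfl)
  ext l; simp [le_or_gt]

lemma pq_eval (a : Fin k → ℂ) (m : Fin k) (z : ℂ) :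
    (pq a m).eval z =
      (∏ l ∈ Finset.Iio m, (z - a l)) * ∏ l ∈ Finset.Ioi m, (1 - conj (a l) * z) := by
  simp [pq, eval_prod]

lemma g_split (a : Fin k → ℂ) (m : Fin k) (z : ℂ) (h : ∀ l, 1 - z * conj (a l) ≠ 0) :
    g a m z = r a m / (1 - z * conj (a m)) * ∏ l ∈ Finset.Iio m, bl (a l) z := by
  rw [g, pq_eval, prod_split (fun l => 1 - z * conj (a l)) m]
  simp only [bl, Finset.prod_div_distrib]
  have h1 : (∏ l ∈ Finset.Iio m, (1 - z * conj (a l))) ≠ 0 :=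
    Finset.prod_ne_zero_iff.mpr (fun l _ => h l)
  have h2 : (∏ l ∈ Finset.Ioi m, (1 - z * conj (a l))) ≠ 0 :=
    Finset.prod_ne_zero_iff.mpr (fun l _ => h l)
  have h3 : (∏ l ∈ Finset.Ioi m, (1 - conj (a l) * z)) = ∏ l ∈ Finset.Ioi m, (1 - z * conj (a l)) :=
    Finset.prod_congr rfl (fun l _ => by ring)
  rw [h3]
  field_simp [h m]


lemma conj_ne_zero {z : ℂ} (h : z ≠ 0) : conj z ≠ 0 := by
  simpa using h

lemma bl_conj (a w : ℂ) : conj (bl a w) = (conj w - conj a) / (1 - conj w * a) := by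
  simp [bl, map_div₀, _root_.map_sub, _root_.map_mul, _root_.map_one, conj_conj]

lemma one_sub_bl {α z w : ℂ} (hz : 1 - z * conj α ≠ 0) (hw : 1 - w * conj α ≠ 0) :
    1 - bl α z * conj (bl α w)
      = (1 - z * conj w) * ((1 - α * conj α) / ((1 - z * conj α) * (1 - conj w * α))) := by
  have hw' : 1 - conj w * α ≠ 0 := by
    have := conj_ne_zero hw
    simpa [_root_.map_sub, _root_.map_mul, _root_.map_one, conj_conj] using this
  rw [bl, bl_conj]
  rw [div_mul_div_comm, one_sub_div (mul_ne_zero hz hw'), mul_div_assoc']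
  congr 1
  ring

lemma r_sq (a : Fin k → ℂ) (ha : ∀ i, ‖a i‖ < 1) (m : Fin k) :
    r a m * conj (r a m) = 1 - a m * conj (a m) := by
  rw [r, Complex.conj_ofReal, ← Complex.ofReal_mul,
    Real.mul_self_sqrt (by nlinarith [ha m, norm_nonneg (a m)])]
  rw [Complex.mul_conj, ← Complex.sq_norm]
  push_cast
  ring


lemma g_mul_conj_g (a : Fin k → ℂ) (ha : ∀ i, ‖a i‖ < 1) (m : Fin k) (z w : ℂ)
    (hz : ∀ l, 1 - z * conj (a l) ≠ 0) (hw : ∀ l, 1 - w * conj (a l) ≠ 0) :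
    g a m z * conj (g a m w)
      = (1 - a m * conj (a m)) / ((1 - z * conj (a m)) * (1 - conj w * (a m)))
        * ∏ l ∈ Finset.Iio m, (bl (a l) z * conj (bl (a l) w)) := by
  rw [g_split a m z hz, g_split a m w hw]
  rw [_root_.map_mul, map_div₀, map_prod]
  simp only [_root_.map_sub, _root_.map_mul, _root_.map_one, conj_conj]
  rw [Finset.prod_mul_distrib]
  have hrs := r_sq a ha m
  have hd1 := hz m
  have hd2 : (1 : ℂ) - conj w * a m ≠ 0 := by
    simpa [_root_.map_sub, _root_.map_mul, _root_.map_one, conj_conj] using conj_ne_zero (hw m)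
  field_simp [hd1, hd2]
  linear_combination (∏ l ∈ Finset.Iio m, bl (a l) z) * (∏ x ∈ Finset.Iio m, conj (bl (a x) w)) * hrs

lemma kernel (c : ℂ) (hc : ‖c‖ = 1) (a : Fin k → ℂ) (ha : ∀ i, ‖a i‖ < 1)
    (z w : ℂ) (hz : ∀ l, 1 - z * conj (a l) ≠ 0) (hw : ∀ l, 1 - w * conj (a l) ≠ 0) :
    1 - (c * ∏ i, bl (a i) z) * conj (c * ∏ i, bl (a i) w)
      = (1 - z * conj w) * ∑ m, g a m z * conj (g a m w) := by
  have hc1 : c * conj c = 1 := by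
    rw [Complex.mul_conj, ← Complex.sq_norm, hc]; norm_num
  have step1 : (c * ∏ i, bl (a i) z) * conj (c * ∏ i, bl (a i) w)
      = ∏ i, (bl (a i) z * conj (bl (a i) w)) := by
    rw [_root_.map_mul, map_prod, Finset.prod_mul_distrib]
    calc c * (∏ i, bl (a i) z) * (conj c * ∏ i, conj (bl (a i) w))
        = (c * conj c) * ((∏ i, bl (a i) z) * ∏ i, conj (bl (a i) w)) := by ring
      _ = (∏ i, bl (a i) z) * ∏ i, conj (bl (a i) w) := by rw [hc1, one_mul]
  rw [step1, telescope]
  rw [Finset.mul_sum]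
  apply Finset.sum_congr rfl
  intro m _
  rw [g_mul_conj_g a ha m z w hz hw, one_sub_bl (hz m) (hw m)]
  ring


lemma hasDerivAt_bl (α z : ℂ) (h : 1 - z * conj α ≠ 0) :
    HasDerivAt (bl α) ((1 - α * conj α) / (1 - z * conj α) ^ 2) z := by
  have h1 : HasDerivAt (fun y : ℂ => y - α) 1 z := (hasDerivAt_id z).sub_const α
  have h2 : HasDerivAt (fun y : ℂ => 1 - y * conj α) (-conj α) z := by
    simpa using ((hasDerivAt_id z).mul_const (conj α)).const_sub 1
  have h3 := h1.div h2 h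
  exact h3.congr_deriv (by ring)

lemma bl_mul_conj_one {α t : ℂ} (htt : t * conj t = 1) (h : 1 - t * conj α ≠ 0) :
    bl α t * conj (bl α t) = 1 := by
  have h2 : (1 : ℂ) - conj t * α ≠ 0 := by
    simpa [_root_.map_sub, _root_.map_mul, _root_.map_one, conj_conj] using conj_ne_zero h
  rw [bl_conj, bl, div_mul_div_comm, div_eq_one_iff_eq (mul_ne_zero h h2)]
  linear_combination (1 - α * conj α) * htt

lemma boundary_term {α t : ℂ} (htt : t * conj t = 1) (h : 1 - t * conj α ≠ 0) :
    t * ((1 - α * conj α) / (1 - t * conj α) ^ 2) * conj (bl α t)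
      = (1 - α * conj α) / ((1 - t * conj α) * (1 - conj t * α)) := by
  have h2 : (1 : ℂ) - conj t * α ≠ 0 := by
    simpa [_root_.map_sub, _root_.map_mul, _root_.map_one, conj_conj] using conj_ne_zero h
  rw [bl_conj]
  have key : t * (conj t - conj α) = 1 - t * conj α := by linear_combination htt
  field_simp [show 1 - α * conj t ≠ 0 by rwa [mul_comm]]
  linear_combination (1 - α * conj α) * key

lemma boundary (c : ℂ) (hc : ‖c‖ = 1) (a : Fin k → ℂ)
    (ha : ∀ i, ‖a i‖ < 1) (t : ℂ) (htt : ‖t‖ = 1) :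
    t * deriv (fun z => c * ∏ i, bl (a i) z) t * conj (c * ∏ i, bl (a i) t)
      = ∑ m, g a m t * conj (g a m t) := by
  have hc1 : c * conj c = 1 := by
    rw [Complex.mul_conj, ← Complex.sq_norm, hc]; norm_num
  have ht1 : t * conj t = 1 := by
    rw [Complex.mul_conj, ← Complex.sq_norm, htt]; norm_num
  have hden : ∀ l, 1 - t * conj (a l) ≠ 0 := fun l => ne_one' htt.le (ha l)
  have hD : HasDerivAt (fun z => c * ∏ i, bl (a i) z)
      (c * ∑ m, (∏ j ∈ Finset.univ.erase m, bl (a j) t) •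
        ((1 - a m * conj (a m)) / (1 - t * conj (a m)) ^ 2)) t := by
    exact (HasDerivAt.fun_finsetProd (fun i _ => hasDerivAt_bl (a i) t (hden i))).const_mul c
  rw [hD.deriv]
  rw [_root_.map_mul, map_prod]
  simp only [smul_eq_mul]
  rw [Finset.mul_sum, Finset.mul_sum, Finset.sum_mul]
  apply Finset.sum_congr rfl
  intro m _
  rw [← Finset.mul_prod_erase _ (fun l => conj (bl (a l) t)) (Finset.mem_univ m)]
  have hone : ∏ j ∈ Finset.univ.erase m, (bl (a j) t * conj (bl (a j) t)) = 1 :=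
    Finset.prod_eq_one (fun l _ => bl_mul_conj_one ht1 (hden l))
  calc t * (c * ((∏ j ∈ Finset.univ.erase m, bl (a j) t) *
          ((1 - a m * conj (a m)) / (1 - t * conj (a m)) ^ 2))) *
        (conj c * (conj (bl (a m) t) * ∏ j ∈ Finset.univ.erase m, conj (bl (a j) t)))
      = (c * conj c) * (∏ j ∈ Finset.univ.erase m, (bl (a j) t * conj (bl (a j) t))) *
        (t * ((1 - a m * conj (a m)) / (1 - t * conj (a m)) ^ 2) * conj (bl (a m) t)) := by
        rw [Finset.prod_mul_distrib]; ring
    _ = t * ((1 - a m * conj (a m)) / (1 - t * conj (a m)) ^ 2) * conj (bl (a m) t) := by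
        rw [hc1, hone]; ring
    _ = (1 - a m * conj (a m)) / ((1 - t * conj (a m)) * (1 - conj t * a m)) :=
        boundary_term ht1 (hden m)
    _ = g a m t * conj (g a m t) := by
        rw [g_mul_conj_g a ha m t t hden hden]
        rw [Finset.prod_eq_one (fun l _ => bl_mul_conj_one ht1 (hden l)), mul_one]


lemma pq_indep (a : Fin k → ℂ) (ha : ∀ i, ‖a i‖ < 1)
    (x : Fin k → ℂ) (h : ∑ m, x m • pq a m = 0) : ∀ m, x m = 0 := by
  by_contra hx
  push_neg at hx
  obtain ⟨m', hm'⟩ := hx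
  set S : Finset (Fin k) := Finset.univ.filter (fun m => x m ≠ 0) with hS
  have hSne : S.Nonempty := ⟨m', by simp [hS, hm']⟩
  set m₀ := S.min' hSne with hm₀
  have hm₀S : m₀ ∈ S := S.min'_mem hSne
  have hx₀ : x m₀ ≠ 0 := by simpa [hS] using hm₀S
  have hlt : ∀ m, m < m₀ → x m = 0 := by
    intro m hm
    by_contra h0
    exact absurd (S.min'_le m (by simp [hS, h0])) (not_le.mpr hm)
  set α := a m₀ with hα
  set s := ((Finset.Iio m₀).filter (fun l => a l = α)).card with hs
  set R₀ : Polynomial ℂ := ∏ l ∈ (Finset.Iio m₀).filter (fun l => ¬ a l = α), (X - C (a l)) with hR₀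
  set Q : Fin k → Polynomial ℂ := fun m =>
    (∏ l ∈ Finset.Ico m₀ m, (X - C (a l))) * (R₀ * ∏ l ∈ Finset.Ioi m, (1 - C (conj (a l)) * X))
    with hQ
  have hdecomp : ∀ m ∈ Finset.Ici m₀, pq a m = (X - C α) ^ s * Q m := by
    intro m hm
    rw [Finset.mem_Ici] at hm
    have hsplit : Finset.Iio m = Finset.Iio m₀ ∪ Finset.Ico m₀ m := by
      ext l
      simp only [Finset.mem_Iio, Finset.mem_union, Finset.mem_Ico]
      constructor
      · intro h1; rcases lt_or_ge l m₀ with h2 | h2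
        · exact Or.inl h2
        · exact Or.inr ⟨h2, h1⟩
      · rintro (h1 | ⟨h1, h2⟩)
        · exact lt_of_lt_of_le h1 hm
        · exact h2
    have hdisj : Disjoint (Finset.Iio m₀) (Finset.Ico m₀ m) := by
      simp [Finset.disjoint_left]
      intro l h1 h2
      exact absurd h1 (not_lt.mpr h2)
    rw [pq, hsplit, Finset.prod_union hdisj,
      ← Finset.prod_filter_mul_prod_filter_not (Finset.Iio m₀) (fun l => a l = α)]
    have hpow : ∏ l ∈ (Finset.Iio m₀).filter (fun l => a l = α), (X - C (a l))
        = (X - C α) ^ s := by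
      rw [Finset.prod_congr rfl (fun l hl => by
        rw [(Finset.mem_filter.mp hl).2]), Finset.prod_const, hs]
    rw [hpow, hQ, hR₀]
    ring
  have hsum : ∑ m ∈ Finset.Ici m₀, x m • pq a m = 0 := by
    rw [← h]
    apply Finset.sum_subset (Finset.subset_univ _)
    intro m _ hm
    rw [Finset.mem_Ici, not_le] at hm
    rw [hlt m hm, zero_smul]
  have hsum2 : (X - C α) ^ s * ∑ m ∈ Finset.Ici m₀, x m • Q m = 0 := by
    rw [Finset.mul_sum, ← hsum]
    apply Finset.sum_congr rfl
    intro m hm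
    rw [hdecomp m hm, mul_smul_comm]
  have hXC : (X - C α) ^ s ≠ 0 := pow_ne_zero _ (X_sub_C_ne_zero α)
  have hsum3 : ∑ m ∈ Finset.Ici m₀, x m • Q m = 0 :=
    (mul_eq_zero.mp hsum2).resolve_left hXC
  -- evaluate at α
  have heval := congrArg (Polynomial.eval α) hsum3
  rw [eval_finset_sum, eval_zero] at heval
  simp only [Polynomial.eval_smul, smul_eq_mul] at heval
  have hself : m₀ ∈ Finset.Ici m₀ := Finset.mem_Ici.mpr le_rfl
  rw [Finset.sum_eq_single_of_mem m₀ hself] at heval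
  · -- x m₀ * eval α (Q m₀) = 0 and eval ≠ 0
    have hQ0 : Polynomial.eval α (Q m₀) ≠ 0 := by
      simp only [hQ, hR₀]
      simp only [Finset.Ico_self, Finset.prod_empty, one_mul, eval_mul, eval_prod, eval_sub,
        eval_X, eval_C, eval_one, eval_prod]
      apply mul_ne_zero
      · apply Finset.prod_ne_zero_iff.mpr
        intro l hl
        have := (Finset.mem_filter.mp hl).2
        exact sub_ne_zero.mpr (fun hc => this hc.symm)
      · apply Finset.prod_ne_zero_iff.mpr
        intro l _
        have h1 : 1 - a l * conj α ≠ 0 := ne_one' (ha l).le (ha m₀)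
        intro hc
        apply h1
        have := congrArg (fun z => conj z) hc
        simpa [_root_.map_sub, _root_.map_mul, _root_.map_one, conj_conj, mul_comm] using this
    exact hx₀ ((mul_eq_zero.mp heval).resolve_right hQ0)
  · intro m hm hne
    have hmm : m₀ < m := lt_of_le_of_ne (Finset.mem_Ici.mp hm) (Ne.symm hne)
    have : Polynomial.eval α (Q m) = 0 := by
      simp only [hQ, eval_mul]
      apply mul_eq_zero_of_left
      rw [eval_prod]
      apply Finset.prod_eq_zero (Finset.mem_Ico.mpr ⟨le_rfl, hmm⟩)
      simp [hα]
    rw [this, mul_zero]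


lemma pq_natDegree (a : Fin k → ℂ) (m : Fin k) : (pq a m).natDegree < k := by
  have h1 : (∏ l ∈ Finset.Iio m, (X - C (a l))).natDegree ≤ (m : ℕ) := by
    have h0 : (∏ l ∈ Finset.Iio m, (X - C (a l))).natDegree
        ≤ ∑ l ∈ Finset.Iio m, (X - C (a l)).natDegree := natDegree_prod_le _ _
    have h1 : ∑ l ∈ Finset.Iio m, (X - C (a l)).natDegree = ∑ l ∈ Finset.Iio m, 1 :=
      Finset.sum_congr rfl (fun l _ => natDegree_X_sub_C (a l))
    have h2 : ∑ l ∈ Finset.Iio m, (1:ℕ) = (m : ℕ) := by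
      rw [Finset.sum_const, smul_eq_mul, mul_one, Fin.card_Iio]
    omega
  have h2 : (∏ l ∈ Finset.Ioi m, (1 - C (conj (a l)) * X)).natDegree ≤ k - 1 - (m : ℕ) := by
    have h0 : (∏ l ∈ Finset.Ioi m, (1 - C (conj (a l)) * X)).natDegree
        ≤ ∑ l ∈ Finset.Ioi m, (1 - C (conj (a l)) * X).natDegree := natDegree_prod_le _ _
    have h1 : ∑ l ∈ Finset.Ioi m, (1 - C (conj (a l)) * X).natDegree
        ≤ ∑ l ∈ Finset.Ioi m, 1 := by
      refine Finset.sum_le_sum (fun l _ => ?_)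
      refine le_trans (natDegree_sub_le _ _) ?_
      have hx : (C (conj (a l)) * X).natDegree ≤ 1 :=
        (natDegree_C_mul_le _ _).trans (le_of_eq natDegree_X)
      rw [natDegree_one]
      omega
    have h2 : ∑ l ∈ Finset.Ioi m, (1:ℕ) = k - 1 - (m : ℕ) := by
      rw [Finset.sum_const, smul_eq_mul, mul_one, Fin.card_Ioi]
    omega
  have h3 : (pq a m).natDegree ≤ (∏ l ∈ Finset.Iio m, (X - C (a l))).natDegree
      + (∏ l ∈ Finset.Ioi m, (1 - C (conj (a l)) * X)).natDegree :=
    natDegree_mul_le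
  have hm := m.isLt
  omega

lemma rank_sel_rows {m m' n : ℕ} (A : Matrix (Fin m) (Fin n) ℂ) (f : Fin m' → Fin m) :
    (Matrix.of fun i j => A (f i) j).rank ≤ A.rank := by
  have h : (Matrix.of fun i j => A (f i) j)
      = (Matrix.of fun i l => if l = f i then (1 : ℂ) else 0) * A := by
    ext i j
    simp [Matrix.mul_apply]
  rw [h]
  exact Matrix.rank_mul_le_right _ _

lemma rank_sel_cols {m n n' : ℕ} (A : Matrix (Fin m) (Fin n) ℂ) (f : Fin n' → Fin n) :
    (Matrix.of fun i j => A i (f j)).rank ≤ A.rank := by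
  have h : (Matrix.of fun i j => A i (f j))
      = A * (Matrix.of fun l j => if l = f j then (1 : ℂ) else 0) := by
    ext i j
    simp [Matrix.mul_apply]
  rw [h]
  exact Matrix.rank_mul_le_left _ _

lemma vdm_full_rank {m : ℕ} (v : Fin m → ℂ) (hv : Function.Injective v) :
    (Matrix.vandermonde v).rank = m := by
  rw [Matrix.rank_of_isUnit _ ((Matrix.isUnit_iff_isUnit_det _).mpr
    (isUnit_iff_ne_zero.mpr (Matrix.det_vandermonde_ne_zero_iff.mpr hv)))]
  simp

lemma vdm_rank (n : ℕ) (t : Fin n → ℂ) (htinj : Function.Injective t) :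
    (Matrix.of fun (i : Fin n) (d : Fin k) => t i ^ (d : ℕ)).rank = min n k := by
  set A := Matrix.of fun (i : Fin n) (d : Fin k) => t i ^ (d : ℕ) with hA
  rcases le_total n k with h | h
  · rw [min_eq_left h]
    refine le_antisymm (Matrix.rank_le_height A) ?_
    have hW : Matrix.vandermonde t = Matrix.of fun i j => A i (Fin.castLE h j) := by
      ext i j; simp [hA, Matrix.vandermonde]
    calc n = (Matrix.vandermonde t).rank := (vdm_full_rank t htinj).symm
      _ ≤ A.rank := by rw [hW]; exact rank_sel_cols A _
  · rw [min_eq_right h]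
    refine le_antisymm (Matrix.rank_le_width A) ?_
    have hW : Matrix.vandermonde (t ∘ Fin.castLE h) = Matrix.of fun i j => A (Fin.castLE h i) j := by
      ext i j; simp [hA, Matrix.vandermonde]
    calc k = (Matrix.vandermonde (t ∘ Fin.castLE h)).rank :=
        (vdm_full_rank _ (htinj.comp (Fin.castLE_injective h))).symm
      _ ≤ A.rank := by rw [hW]; exact rank_sel_rows A _


lemma r_ne_zero (a : Fin k → ℂ) (ha : ∀ i, ‖a i‖ < 1) (m : Fin k) :
    r a m ≠ 0 := by
  rw [r]
  norm_cast
  have : 0 < Real.sqrt (1 - ‖a m‖ ^ 2) :=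
    Real.sqrt_pos.mpr (by nlinarith [ha m, norm_nonneg (a m)])
  exact ne_of_gt this


noncomputable def Cc (a : Fin k → ℂ) : Matrix (Fin k) (Fin k) ℂ :=
  Matrix.of fun d m => r a m * (pq a m).coeff d

lemma Cc_isUnit (a : Fin k → ℂ) (ha : ∀ i, ‖a i‖ < 1) : IsUnit (Cc a) := by
  apply Matrix.mulVec_injective_iff_isUnit.mp
  have hker : ∀ x, (Cc a).mulVec x = 0 → x = 0 := by
    intro x hx
    set p : Polynomial ℂ := ∑ m, (x m * r a m) • pq a m with hp
    have hcoeff : ∀ d : Fin k, p.coeff d = 0 := by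
      intro d
      have h1 := congrFun hx d
      simp only [Matrix.mulVec, dotProduct, Pi.zero_apply] at h1
      rw [hp, Polynomial.finset_sum_coeff]
      rw [← h1]
      apply Finset.sum_congr rfl
      intro m _
      rw [Polynomial.coeff_smul, smul_eq_mul, Cc]
      simp only [Matrix.of_apply]
      ring
    have hp0 : p = 0 := by
      apply Polynomial.ext
      intro d
      rw [Polynomial.coeff_zero]
      by_cases hd : d < k
      · exact hcoeff ⟨d, hd⟩
      · rw [hp, Polynomial.finset_sum_coeff]
        apply Finset.sum_eq_zero
        intro m _
        rw [Polynomial.coeff_smul,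
          Polynomial.coeff_eq_zero_of_natDegree_lt (lt_of_lt_of_le (pq_natDegree a m) (not_lt.mp hd)),
          smul_zero]
    have := pq_indep a ha (fun m => x m * r a m) hp0
    funext m
    exact (mul_eq_zero.mp (this m)).resolve_right (r_ne_zero a ha m)
  intro x y hxy
  have h0 : (Cc a).mulVec (x - y) = 0 := by
    rw [Matrix.mulVec_sub, hxy, sub_self]
  have := hker _ h0
  funext i
  have := congrFun this i
  simp only [Pi.sub_apply, Pi.zero_apply, sub_eq_zero] at this
  exact this

lemma rank_G (a : Fin k → ℂ) (ha : ∀ i, ‖a i‖ < 1)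
    {n : ℕ} (t : Fin n → ℂ) (ht : ∀ i, ‖t i‖ ≤ 1)
    (htinj : Function.Injective t) :
    (Matrix.of fun (i : Fin n) (m : Fin k) => g a m (t i)).rank = min n k := by
  set V : Matrix (Fin n) (Fin k) ℂ := Matrix.of fun i d => t i ^ (d : ℕ) with hV
  have hfact : (Matrix.of fun (i : Fin n) (m : Fin k) => g a m (t i))
      = Matrix.diagonal (fun i => (∏ l, (1 - t i * conj (a l)))⁻¹) * (V * Cc a) := by
    ext i m
    rw [Matrix.diagonal_mul, Matrix.mul_apply]
    have hdeg := pq_natDegree a m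
    have heval : (pq a m).eval (t i) = ∑ d ∈ Finset.range k, (pq a m).coeff d * t i ^ d :=
      Polynomial.eval_eq_sum_range' hdeg _
    have hsum : ∑ d : Fin k, V i d * Cc a d m
        = r a m * ∑ d ∈ Finset.range k, (pq a m).coeff d * t i ^ d := by
      rw [Finset.mul_sum, ← Fin.sum_univ_eq_sum_range (fun d => r a m * ((pq a m).coeff d * t i ^ d)) k]
      apply Finset.sum_congr rfl
      intro d _
      rw [hV, Cc]
      simp only [Matrix.of_apply]
      ring
    rw [Matrix.of_apply, g, hsum, ← heval]
    rw [div_eq_inv_mul]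
  rw [hfact]
  have hdet1 : IsUnit (Matrix.diagonal (fun i => (∏ l, (1 - t i * conj (a l)))⁻¹)).det := by
    rw [Matrix.det_diagonal]
    apply isUnit_iff_ne_zero.mpr
    apply Finset.prod_ne_zero_iff.mpr
    intro i _
    exact inv_ne_zero (Finset.prod_ne_zero_iff.mpr (fun l _ => ne_one' (ht i) (ha l)))
  have hdet2 : IsUnit (Cc a).det := (Matrix.isUnit_iff_isUnit_det _).mp (Cc_isUnit a ha)
  rw [Matrix.rank_mul_eq_right_of_isUnit_det _ _ hdet1,
    Matrix.rank_mul_eq_left_of_isUnit_det _ _ hdet2]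
  exact vdm_rank n t htinj

end SPM


theorem schwarz_pick_matrix_posSemidef_rank (k n : ℕ) (c : ℂ) (a : Fin k → ℂ)
    (hc : ‖c‖ = 1) (ha : ∀ i, ‖a i‖ < 1)
    (f : ℂ → ℂ)
    (hf : f = fun z => c * ∏ i, (z - a i) / (1 - z * conj (a i)))
    (t : Fin n → ℂ) (ht : ∀ i, ‖t i‖ ≤ 1) (htinj : Function.Injective t)
    (P : Matrix (Fin n) (Fin n) ℂ)
    (hP : ∀ i j, P i j =
      if i = j ∧ ‖t i‖ = 1 then t i * deriv f (t i) * conj (f (t i))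
      else (1 - f (t i) * conj (f (t j))) / (1 - t i * conj (t j))) :
    P.PosSemidef ∧ P.rank = min n k := by
  have hfbl : f = fun z => c * ∏ i, SPM.bl (a i) z := hf
  set G : Matrix (Fin n) (Fin k) ℂ := Matrix.of (fun i m => SPM.g a m (t i)) with hG
  have hden : ∀ i l, 1 - t i * conj (a l) ≠ 0 := fun i l => SPM.ne_one' (ht i) (ha l)
  have hPG : P = G * G.conjTranspose := by
    ext i j
    rw [hP i j, Matrix.mul_apply]
    have hsum : ∑ m, G i m * G.conjTranspose m j
        = ∑ m, SPM.g a m (t i) * conj (SPM.g a m (t j)) := by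
      apply Finset.sum_congr rfl
      intro m _
      rw [Matrix.conjTranspose_apply]
      rfl
    rw [hsum]
    split
    · rename_i h
      obtain ⟨rfl, hti⟩ := h
      rw [hfbl]
      exact SPM.boundary c hc a ha (t i) hti
    · rename_i h
      have hne : 1 - t i * conj (t j) ≠ 0 := by
        by_cases hij : i = j
        · subst hij
          have : ‖t i‖ < 1 := lt_of_le_of_ne (ht i) (fun hh => h ⟨rfl, hh⟩)
          exact SPM.ne_one' (ht i) this
        · exact SPM.ne_one'' (ht i) (ht j) (fun hh => hij (htinj hh))
      rw [hfbl, div_eq_iff hne]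
      rw [SPM.kernel c hc a ha (t i) (t j) (hden i) (hden j)]
      ring
  constructor
  · rw [hPG]
    exact Matrix.posSemidef_self_mul_conjTranspose G
  · rw [hPG, Matrix.rank_self_mul_conjTranspose]
    exact SPM.rank_G a ha t ht htinj
end

section
/- Let t₁,…,tₙ be distinct points on the unit circle, w₁,…,wₙ points on the unit circle, and let f be a rational function mapping the open unit disk into the closed unit disk, of degree at most n-1, satisfying f(t_i) = w_i for i = 1,…,n. Then f is a finite Blaschke product, i.e., |f(t)| = 1 for all t on the unit circle. -/
open Complex Polynomial

/-- Conjugate-reversal of a polynomial relative to degree bound `m`. -/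
noncomputable def conjRev (m : ℕ) (a : Polynomial ℂ) : Polynomial ℂ :=
  ∑ k ∈ Finset.range (m + 1), C (starRingEnd ℂ (a.coeff k)) * X ^ (m - k)

lemma conjRev_natDegree_le (m : ℕ) (a : Polynomial ℂ) :
    (conjRev m a).natDegree ≤ m := by
  apply Polynomial.natDegree_sum_le_of_forall_le
  intro k hk
  exact (Polynomial.natDegree_C_mul_X_pow_le _ _).trans (Nat.sub_le _ _)

lemma conjRev_eval (m : ℕ) (a : Polynomial ℂ) (ha : a.natDegree ≤ m)
    (z : ℂ) (hz : ‖z‖ = 1) :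
    (conjRev m a).eval z = z ^ m * (starRingEnd ℂ) (a.eval z) := by
  have hz1 : z * (starRingEnd ℂ) z = 1 := by
    rw [Complex.mul_conj]
    norm_cast
    rw [Complex.normSq_eq_norm_sq, hz]; norm_num
  have he : a.eval z = ∑ k ∈ Finset.range (m + 1), a.coeff k * z ^ k :=
    Polynomial.eval_eq_sum_range' (Nat.lt_succ_of_le ha) z
  rw [conjRev, Polynomial.eval_finset_sum, he, map_sum, Finset.mul_sum]
  apply Finset.sum_congr rfl
  intro k hk
  simp only [Finset.mem_range, Nat.lt_succ_iff] at hk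
  rw [Polynomial.eval_mul, Polynomial.eval_C, Polynomial.eval_pow, Polynomial.eval_X,
    map_mul, map_pow]
  have key : z ^ m * ((starRingEnd ℂ) z) ^ k = z ^ (m - k) := by
    calc z ^ m * ((starRingEnd ℂ) z) ^ k
        = z ^ (m - k) * (z ^ k * ((starRingEnd ℂ) z) ^ k) := by
          rw [← mul_assoc, ← pow_add, Nat.sub_add_cancel hk]
      _ = z ^ (m - k) * (z * (starRingEnd ℂ) z) ^ k := by rw [mul_pow]
      _ = z ^ (m - k) := by rw [hz1, one_pow, mul_one]
  rw [← key]; ring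

theorem low_degree_solution_is_blaschke (n : ℕ) (hn : 0 < n) (t w : Fin n → ℂ)
    (ht : ∀ i, ‖t i‖ = 1) (hw : ∀ i, ‖w i‖ = 1)
    (htinj : Function.Injective t)
    (p q : Polynomial ℂ) (hq : q ≠ 0) (hcop : IsCoprime p q)
    (hdegp : p.natDegree ≤ n - 1) (hdegq : q.natDegree ≤ n - 1)
    (hpole : ∀ z : ℂ, ‖z‖ < 1 → q.eval z ≠ 0)
    (hschur : ∀ z : ℂ, ‖z‖ < 1 →
      ‖p.eval z / q.eval z‖ ≤ 1)
    (hinterp : ∀ i, q.eval (t i) ≠ 0 ∧ p.eval (t i) = w i * q.eval (t i)) :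
    ∀ z : ℂ, ‖z‖ = 1 →
      q.eval z ≠ 0 ∧ ‖p.eval z / q.eval z‖ = 1 := by
  set m := n - 1 with hm
  set R : Polynomial ℂ := conjRev m q * q - conjRev m p * p with hRdef
  -- no common roots
  have hnocommon : ∀ z : ℂ, ¬(p.eval z = 0 ∧ q.eval z = 0) := by
    rintro z ⟨hp0, hq0⟩
    obtain ⟨a, b, hab⟩ := hcop
    have := congrArg (Polynomial.eval z) hab
    simp [hp0, hq0] at this
  -- |p| ≤ |q| on the closed disk
  have hle : ∀ z : ℂ, ‖z‖ ≤ 1 →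
      ‖p.eval z‖ ≤ ‖q.eval z‖ := by
    intro z hz
    have hclosed : IsClosed {z : ℂ | ‖p.eval z‖ ≤ ‖q.eval z‖} := by
      have : {z : ℂ | ‖p.eval z‖ ≤ ‖q.eval z‖} =
          (fun z => ‖q.eval z‖ - ‖p.eval z‖) ⁻¹' Set.Ici 0 := by
        ext u; simp [sub_nonneg]
      rw [this]
      exact IsClosed.preimage (by continuity) isClosed_Ici
    have hsub : Metric.closedBall (0 : ℂ) 1 ⊆
        {z : ℂ | ‖p.eval z‖ ≤ ‖q.eval z‖} := by
      rw [← closure_ball (0 : ℂ) one_ne_zero]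
      apply closure_minimal _ hclosed
      intro u hu
      simp only [Metric.mem_ball, Complex.dist_eq, sub_zero] at hu
      have hq0 := hpole u hu
      have h1 := hschur u hu
      rw [norm_div, div_le_one (norm_pos_iff.mpr hq0)] at h1
      exact h1
    exact hsub (by simpa [Metric.mem_closedBall, Complex.dist_eq] using hz)
  -- the circle identity for R
  have hcirc : ∀ z : ℂ, ‖z‖ = 1 →
      R.eval z = z ^ m *
        (((Complex.normSq (q.eval z) : ℝ) : ℂ) - ((Complex.normSq (p.eval z) : ℝ) : ℂ)) := by
    intro z hz
    have key : ∀ u : ℂ, z ^ m * (starRingEnd ℂ) u * u = z ^ m * ((Complex.normSq u : ℝ) : ℂ) := by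
      intro u
      rw [mul_assoc, mul_comm ((starRingEnd ℂ) u) u, Complex.mul_conj]
    rw [hRdef]
    simp only [eval_sub, eval_mul]
    rw [conjRev_eval m q hdegq z hz, conjRev_eval m p hdegp z hz, key, key, mul_sub]
  -- roots of R at the interpolation nodes
  have hroot : ∀ i, R.eval (t i) = 0 := by
    intro i
    obtain ⟨hq0, hpw⟩ := hinterp i
    rw [hcirc _ (ht i), hpw]
    have : Complex.normSq (w i * q.eval (t i)) = Complex.normSq (q.eval (t i)) := by
      rw [map_mul, Complex.normSq_eq_norm_sq (w i), hw i]; norm_num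
    rw [this, sub_self, mul_zero]
  -- derivative of R vanishes at the nodes
  have hderiv : ∀ i, (derivative R).eval (t i) = 0 := by
    intro i
    set z₀ := t i with hz₀def
    have hz₀ : Complex.exp ((t i).arg * I) = z₀ := by
      have := Complex.norm_mul_exp_arg_mul_I z₀
      rwa [ht i, Complex.ofReal_one, one_mul] at this
    set θ₀ : ℝ := (t i).arg with hθ₀def
    set c : ℂ := -(m : ℂ) * I with hcdef
    set H : ℝ → ℂ := fun θ => Complex.exp (c * θ) * R.eval (Complex.exp (θ * I)) with hHdef
    have habs : ∀ θ : ℝ, ‖Complex.exp ((θ : ℂ) * I)‖ = 1 := by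
      intro θ
      rw [Complex.norm_exp]
      simp
    set h : ℝ → ℝ := fun θ => Complex.normSq (q.eval (Complex.exp ((θ : ℂ) * I))) -
      Complex.normSq (p.eval (Complex.exp ((θ : ℂ) * I))) with hhdef
    have hHh : ∀ θ : ℝ, H θ = ((h θ : ℝ) : ℂ) := by
      intro θ
      simp only [hHdef, hhdef]
      rw [hcirc _ (habs θ)]
      push_cast
      rw [← Complex.exp_nat_mul, ← mul_assoc, ← Complex.exp_add]
      have : c * (θ : ℂ) + (m : ℂ) * ((θ : ℂ) * I) = 0 := by rw [hcdef]; ring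
      rw [this, Complex.exp_zero, one_mul]
    -- derivative computations
    have hor : HasDerivAt (fun θ : ℝ => ((θ : ℝ) : ℂ)) 1 θ₀ := by
      simpa using (hasDerivAt_id θ₀).ofReal_comp
    have hg : HasDerivAt (fun θ : ℝ => Complex.exp ((θ : ℂ) * I)) (z₀ * I) θ₀ := by
      have h1 : HasDerivAt (fun θ : ℝ => (θ : ℂ) * I) I θ₀ := by
        simpa using hor.mul_const I
      have := h1.cexp
      simpa [hz₀] using this
    have hf : HasDerivAt (fun θ : ℝ => Complex.exp (c * (θ : ℂ))) (Complex.exp (c * θ₀) * c) θ₀ := by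
      have h1 : HasDerivAt (fun θ : ℝ => c * (θ : ℂ)) c θ₀ := by
        simpa using hor.const_mul c
      exact h1.cexp
    have hRg : HasDerivAt (fun θ : ℝ => R.eval (Complex.exp ((θ : ℂ) * I)))
        ((derivative R).eval z₀ * (z₀ * I)) θ₀ := by
      have := (R.hasDerivAt (Complex.exp ((θ₀ : ℂ) * I))).comp θ₀ hg
      simpa [hz₀, Function.comp_def] using this
    set D : ℂ := Complex.exp (c * θ₀) * c * R.eval z₀ +
      Complex.exp (c * θ₀) * ((derivative R).eval z₀ * (z₀ * I)) with hDdef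
    have hH : HasDerivAt H D θ₀ := by
      have := hf.mul hRg
      rw [hDdef]
      simpa [hHdef, hz₀, Pi.mul_def] using this
    -- h = Re ∘ H has derivative D.re
    have hhre : HasDerivAt h D.re θ₀ := by
      have h1 : HasDerivAt (Complex.reCLM ∘ H) (Complex.reCLM D) θ₀ :=
        Complex.reCLM.hasFDerivAt.comp_hasDerivAt θ₀ hH
      have : Complex.reCLM ∘ H = h := by
        funext θ; simp [Function.comp, hHh θ]
      rwa [this] at h1
    -- θ₀ is a global min of h
    have hθ₀0 : h θ₀ = 0 := by
      have := hHh θ₀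
      simp only [hHdef] at this
      have h2 : R.eval (Complex.exp ((θ₀ : ℂ) * I)) = 0 := by rw [hz₀]; exact hroot i
      rw [h2, mul_zero] at this
      exact_mod_cast this.symm
    have hnn : ∀ θ : ℝ, 0 ≤ h θ := by
      intro θ
      rw [hhdef]
      simp only [sub_nonneg, Complex.normSq_eq_norm_sq]
      have := hle _ (le_of_eq (habs θ))
      exact pow_le_pow_left₀ (norm_nonneg _) this 2
    have hmin : IsLocalMin h θ₀ := Filter.Eventually.of_forall fun θ => by
      rw [hθ₀0]; exact hnn θ
    have hre0 : D.re = 0 := by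
      have := hmin.deriv_eq_zero
      rwa [hhre.deriv] at this
    have him0 : D.im = 0 := by
      have h1 : HasDerivAt (Complex.imCLM ∘ H) (Complex.imCLM D) θ₀ :=
        Complex.imCLM.hasFDerivAt.comp_hasDerivAt θ₀ hH
      have h2 : Complex.imCLM ∘ H = fun _ => (0 : ℝ) := by
        funext θ; simp [Function.comp, hHh θ]
      rw [h2] at h1
      have h3 : deriv (fun _ : ℝ => (0 : ℝ)) θ₀ = 0 := deriv_const _ _
      have := h1.deriv
      rw [h3] at this
      exact this.symm
    have hD0 : D = 0 := Complex.ext hre0 him0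
    have hR0 : R.eval z₀ = 0 := hroot i
    rw [hDdef, hR0, mul_zero, zero_add] at hD0
    have hexp := Complex.exp_ne_zero (c * θ₀)
    have hz₀ne : z₀ ≠ 0 := by
      intro h'
      have := ht i
      rw [← hz₀def, h'] at this
      simp at this
    have := mul_eq_zero.mp hD0
    rcases this with h' | h'
    · exact absurd h' hexp
    · rcases mul_eq_zero.mp h' with h'' | h''
      · exact h''
      · rcases mul_eq_zero.mp h'' with h3 | h3
        · exact absurd h3 hz₀ne
        · exact absurd h3 Complex.I_ne_zero
  -- each (X - t i)^2 divides R
  have hsq : ∀ i, (X - C (t i)) ^ 2 ∣ R := by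
    intro i
    obtain ⟨S, hS⟩ := Polynomial.dvd_iff_isRoot.mpr (hroot i)
    have hd := hderiv i
    rw [hS, derivative_mul] at hd
    simp only [derivative_sub, derivative_X, derivative_C, sub_zero, one_mul, eval_add,
      eval_mul, eval_sub, eval_X, eval_C, sub_self, zero_mul, add_zero] at hd
    obtain ⟨T, hT⟩ := Polynomial.dvd_iff_isRoot.mpr hd
    refine ⟨T, ?_⟩
    rw [hS, hT]; ring
  -- R must be zero
  have hRzero : R = 0 := by
    by_contra hR0
    have hpair : (↑(Finset.univ : Finset (Fin n)) : Set (Fin n)).Pairwise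
        (Function.onFun IsCoprime fun i => (X - C (t i)) ^ 2) := by
      intro i _ j _ hij
      have hne : t i - t j ≠ 0 := sub_ne_zero.mpr fun h => hij (htinj h)
      exact (Polynomial.isCoprime_X_sub_C_of_isUnit_sub hne.isUnit).pow
    have hdvd : (∏ i : Fin n, (X - C (t i)) ^ 2) ∣ R :=
      Finset.prod_dvd_of_coprime hpair fun i _ => hsq i
    have h1 := Polynomial.natDegree_le_of_dvd hdvd hR0
    have h2 : (∏ i : Fin n, (X - C (t i)) ^ 2).natDegree = 2 * n := by
      rw [Polynomial.natDegree_prod _ _ fun i _ =>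
        pow_ne_zero _ (Polynomial.X_sub_C_ne_zero _)]
      simp [Polynomial.natDegree_pow, Polynomial.natDegree_X_sub_C, mul_comm]
    have h3 : R.natDegree ≤ 2 * m := by
      calc R.natDegree ≤ max (conjRev m q * q).natDegree (conjRev m p * p).natDegree :=
            Polynomial.natDegree_sub_le _ _
        _ ≤ 2 * m := by
            apply max_le
            · exact Polynomial.natDegree_mul_le.trans
                (by have := conjRev_natDegree_le m q; omega)
            · exact Polynomial.natDegree_mul_le.trans
                (by have := conjRev_natDegree_le m p; omega)
    rw [h2] at h1
    omega
  -- conclude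
  intro z hz
  have h0 := hcirc z hz
  rw [hRzero, eval_zero] at h0
  have hzne : z ≠ 0 := by
    intro h'; rw [h'] at hz; simp at hz
  have heq : Complex.normSq (q.eval z) = Complex.normSq (p.eval z) := by
    have := (mul_eq_zero.mp h0.symm).resolve_left (pow_ne_zero m hzne)
    have h2 : ((Complex.normSq (q.eval z) : ℝ) : ℂ) = ((Complex.normSq (p.eval z) : ℝ) : ℂ) :=
      sub_eq_zero.mp this
    exact_mod_cast h2
  have hqz : q.eval z ≠ 0 := by
    intro h'
    apply hnocommon z
    constructor
    · have : Complex.normSq (p.eval z) = 0 := by rw [← heq, h', map_zero]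
      exact Complex.normSq_eq_zero.mp this
    · exact h'
  refine ⟨hqz, ?_⟩
  have habseq : ‖p.eval z‖ = ‖q.eval z‖ := by
    rw [Complex.norm_def, Complex.norm_def, heq]
  rw [norm_div, habseq, div_self (norm_ne_zero_iff.mpr hqz)]
end

section
/- Let t₁,…,tₙ be distinct unimodular points and w ∈ 𝕋. If f is a rational function of degree at most n-1 mapping the open unit disk into the closed unit disk and f(t_i) = w for all i = 1,…,n, then f is the constant function w. -/
open Complex Polynomial

theorem constant_data_forces_constant (n : ℕ) (hn : 0 < n) (t : Fin n → ℂ) (w : ℂ)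
    (ht : ∀ i, ‖t i‖ = 1) (hw : ‖w‖ = 1)
    (htinj : Function.Injective t)
    (p q : Polynomial ℂ) (hq : q ≠ 0) (hcop : IsCoprime p q)
    (hdegp : p.natDegree ≤ n - 1) (hdegq : q.natDegree ≤ n - 1)
    (hpole : ∀ z : ℂ, ‖z‖ < 1 → q.eval z ≠ 0)
    (hschur : ∀ z : ℂ, ‖z‖ < 1 →
      ‖p.eval z / q.eval z‖ ≤ 1)
    (hinterp : ∀ i, q.eval (t i) ≠ 0 ∧ p.eval (t i) = w * q.eval (t i)) :
    p = Polynomial.C w * q := by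
  have hz : p - Polynomial.C w * q = 0 := by
    apply Polynomial.eq_zero_of_natDegree_lt_card_of_eval_eq_zero _ htinj
    · intro i
      simp [(hinterp i).2]
    · calc (p - Polynomial.C w * q).natDegree
          ≤ max p.natDegree (Polynomial.C w * q).natDegree :=
            Polynomial.natDegree_sub_le _ _
        _ ≤ n - 1 := by
            refine max_le hdegp ?_
            exact le_trans (Polynomial.natDegree_mul_le.trans (by simp)) hdegq
        _ < Fintype.card (Fin n) := by simp; omega
  linear_combination hz
end

section
/- Let t₁,…,t_{n-1} be distinct unimodular points, wₙ a unimodular point with wₙ ≠ 1, and γ₁,…,γ_{n-1} > 0. Then the function f(z) = wₙ · (1 - Σ_{i=1}^{n-1} (1 - z·conj(tₙ))(1 - conj(wₙ)) / ((1 - z·conj(t_i))(1 - t_i·conj(tₙ))·γ_i)) / (1 - Σ_{i=1}^{n-1} (1 - z·conj(tₙ))(wₙ - 1)·conj(w_i) / ((1 - z·conj(t_i))(1 - t_i·conj(tₙ))·γ_i)) with w_i = 1 for all i ≤ n-1 satisfies f(t_i) = 1 for i = 1,…,n-1 and f(tₙ) = wₙ, where tₙ is a unimodular point distinct from t₁,…,t_{n-1}.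 -/
open Complex ComplexConjugate Topology Filter

theorem special_parametrization_interpolates (m : ℕ) (t : Fin m → ℂ) (tN wN : ℂ)
    (ht : ∀ i, ‖t i‖ = 1) (htinj : Function.Injective t)
    (htN : ‖tN‖ = 1) (htNt : ∀ i, tN ≠ t i)
    (hwN : ‖wN‖ = 1) (hwN1 : wN ≠ 1)
    (γ : Fin m → ℝ) (hγ : ∀ i, 0 < γ i)
    (S : ℂ → ℂ)
    (hS : S = fun z => ∑ i, (1 - z * conj tN) /
      ((1 - z * conj (t i)) * (1 - t i * conj tN) * (γ i : ℂ)))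
    (f : ℂ → ℂ)
    (hf : f = fun z => wN * (1 - (1 - conj wN) * S z) / (1 - (wN - 1) * S z)) :
    f tN = wN ∧ ∀ i, Tendsto f (𝓝[≠] (t i)) (𝓝 1) := by
  have hmc : ∀ z : ℂ, ‖z‖ = 1 → z * conj z = 1 := by
    intro z h
    rw [Complex.mul_conj]
    norm_cast
    rw [Complex.normSq_eq_norm_sq, h, one_pow]
  have htt : ∀ j, t j * conj (t j) = 1 := fun j => hmc _ (ht j)
  have htNtN : tN * conj tN = 1 := hmc _ htN
  have hwNwN : wN * conj wN = 1 := hmc _ hwN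
  have hconjne : ∀ j, conj (t j) ≠ 0 := by
    intro j h0
    have := htt j
    rw [h0, mul_zero] at this
    exact one_ne_zero this.symm
  have hzero : ∀ (z : ℂ) (j : Fin m), 1 - z * conj (t j) = 0 ↔ z = t j := by
    intro z j
    constructor
    · intro h
      have h1 : z * conj (t j) = t j * conj (t j) := by
        rw [htt j]; linear_combination -h
      exact mul_right_cancel₀ (hconjne j) h1
    · intro h; rw [h, htt j]; ring
  have hcN : ∀ j, (1 : ℂ) - t j * conj tN ≠ 0 := by
    intro j h
    have hcne : conj tN ≠ 0 := by
      intro h0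
      rw [h0, mul_zero] at htNtN
      exact one_ne_zero htNtN.symm
    have h1 : t j * conj tN = tN * conj tN := by
      rw [htNtN]; linear_combination -h
    exact htNt j (mul_right_cancel₀ hcne h1).symm
  have hγne : ∀ j, (γ j : ℂ) ≠ 0 := by
    intro j
    simpa using ne_of_gt (hγ j)
  constructor
  · rw [hf, hS]
    have h0 : 1 - tN * conj tN = 0 := by rw [htNtN]; ring
    simp [h0]
  · intro i
    set c : Fin m → ℂ := fun j => (1 - t j * conj tN) * (γ j : ℂ) with hc_def
    have hc : ∀ j, c j ≠ 0 := fun j => mul_ne_zero (hcN j) (hγne j)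
    set D : ℂ → ℂ := fun z => 1 - z * conj (t i) with hD_def
    set T : ℂ → ℂ := fun z => (1 - z * conj tN) / c i +
      ∑ j ∈ Finset.univ.erase i,
        ((1 - z * conj tN) * (1 - z * conj (t i))) / ((1 - z * conj (t j)) * c j)
      with hT_def
    have hTS : ∀ z, z ≠ t i → D z * S z = T z := by
      intro z hz
      have hD : D z ≠ 0 := fun h => hz ((hzero z i).1 h)
      rw [hS, hT_def]
      simp only
      rw [Finset.mul_sum, ← Finset.add_sum_erase _ _ (Finset.mem_univ i)]
      congr 1
      · show D z * ((1 - z * conj tN) / ((1 - z * conj (t i)) * (1 - t i * conj tN) * (γ i : ℂ)))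
          = (1 - z * conj tN) / c i
        have hDz : (1 : ℂ) - z * conj (t i) ≠ 0 := hD
        rw [mul_assoc, mul_div_assoc', mul_div_mul_left _ _ hDz]
      · apply Finset.sum_congr rfl
        intro j _
        rw [hc_def, hD_def]
        simp only
        rw [mul_div_assoc', mul_comm ((1:ℂ) - z * conj (t i)), mul_assoc]
    have key : ∀ z, z ≠ t i →
        f z = wN * ((D z - (1 - conj wN) * T z) / (D z - (wN - 1) * T z)) := by
      intro z hz
      have hD : D z ≠ 0 := fun h => hz ((hzero z i).1 h)
      have h1 : D z - (1 - conj wN) * T z = D z * (1 - (1 - conj wN) * S z) := by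
        rw [← hTS z hz]; ring
      have h2 : D z - (wN - 1) * T z = D z * (1 - (wN - 1) * S z) := by
        rw [← hTS z hz]; ring
      rw [hf]
      simp only
      rw [h1, h2, mul_div_mul_left _ _ hD, mul_div_assoc]
    -- limit computation
    have hval : (1 - t i * conj tN) / c i = (γ i : ℂ)⁻¹ := by
      rw [hc_def]
      simp only
      rw [← div_div, div_self (hcN i), one_div]
    have hTlim : Tendsto T (𝓝 (t i)) (𝓝 ((γ i : ℂ)⁻¹)) := by
      have h0 : 1 - t i * conj (t i) = 0 := by rw [htt i]; ring
      have h1 : Tendsto (fun z : ℂ => (1 - z * conj tN) / c i) (𝓝 (t i))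
          (𝓝 ((1 - t i * conj tN) / c i)) :=
        Tendsto.div_const (Continuous.tendsto (by fun_prop) _) _
      have h2 : ∀ j ∈ Finset.univ.erase i,
          Tendsto (fun z : ℂ => ((1 - z * conj tN) * (1 - z * conj (t i))) /
            ((1 - z * conj (t j)) * c j)) (𝓝 (t i)) (𝓝 0) := by
        intro j hj
        have hden : (1 - t i * conj (t j)) * c j ≠ 0 := by
          apply mul_ne_zero _ (hc j)
          rw [Ne, hzero]
          intro h
          exact (Finset.mem_erase.1 hj).1 (htinj h.symm)
        have h3 : Tendsto (fun z : ℂ => ((1 - z * conj tN) * (1 - z * conj (t i))) /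
            ((1 - z * conj (t j)) * c j)) (𝓝 (t i))
            (𝓝 (((1 - t i * conj tN) * (1 - t i * conj (t i))) /
              ((1 - t i * conj (t j)) * c j))) :=
          Tendsto.div (Continuous.tendsto (by fun_prop) _)
            (Continuous.tendsto (by fun_prop) _) hden
        rw [h0, mul_zero, zero_div] at h3
        exact h3
      have hsum := tendsto_finset_sum _ h2
      rw [Finset.sum_const_zero] at hsum
      have h4 := h1.add hsum
      rw [add_zero, hval] at h4
      exact h4
    have hDlim : Tendsto D (𝓝 (t i)) (𝓝 0) := by
      have h0 : (fun z : ℂ => 1 - z * conj (t i)) (t i) = 0 := by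
        simp only; rw [htt i]; ring
      rw [hD_def, ← h0]
      exact Continuous.tendsto (by fun_prop) _
    have hdenne : (0 : ℂ) - (wN - 1) * (γ i : ℂ)⁻¹ ≠ 0 := by
      rw [zero_sub, neg_ne_zero]
      exact mul_ne_zero (sub_ne_zero.2 hwN1) (inv_ne_zero (hγne i))
    have hglim : Tendsto (fun z => wN * ((D z - (1 - conj wN) * T z) / (D z - (wN - 1) * T z)))
        (𝓝[≠] (t i)) (𝓝 1) := by
      have hnum : Tendsto (fun z => D z - (1 - conj wN) * T z) (𝓝 (t i))
          (𝓝 (0 - (1 - conj wN) * (γ i : ℂ)⁻¹)) := hDlim.sub (hTlim.const_mul _)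
      have hden : Tendsto (fun z => D z - (wN - 1) * T z) (𝓝 (t i))
          (𝓝 (0 - (wN - 1) * (γ i : ℂ)⁻¹)) := hDlim.sub (hTlim.const_mul _)
      have hlim : Tendsto (fun z => wN * ((D z - (1 - conj wN) * T z) / (D z - (wN - 1) * T z)))
          (𝓝 (t i)) (𝓝 (wN * ((0 - (1 - conj wN) * (γ i : ℂ)⁻¹) / (0 - (wN - 1) * (γ i : ℂ)⁻¹)))) :=
        ((hnum.div hden hdenne).const_mul _)
      have hone : wN * ((0 - (1 - conj wN) * (γ i : ℂ)⁻¹) / (0 - (wN - 1) * (γ i : ℂ)⁻¹)) = 1 := by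
        have hw : wN - 1 ≠ 0 := sub_ne_zero.2 hwN1
        have hg : (γ i : ℂ)⁻¹ ≠ 0 := inv_ne_zero (hγne i)
        rw [zero_sub, zero_sub, neg_div_neg_eq, mul_div_mul_right _ _ hg,
          mul_div_assoc']
        have hwN2 : wN * (1 - conj wN) = wN - 1 := by linear_combination -hwNwN
        rw [hwN2, div_self hw]
      rw [hone] at hlim
      exact hlim.mono_left nhdsWithin_le_nhds
    apply Tendsto.congr' _ hglim
    filter_upwards [self_mem_nhdsWithin] with z hz
    exact (key z hz).symm
end
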